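/- arXiv:1112.3864 — 6 statements merged into one kernel-verified Lean document; each statement's English description precedes it below -/
import Mathlib

section
/- Suppose A and B are algebras such that the congruence lattice of A × B is modular. If φ₁ ≤ φ₂ are congruences on A and ψ is a congruence on B, then every congruence θ on A × B satisfying φ₁ × ψ ≤ θ ≤ φ₂ × ψ is a product congruence, i.e. θ = φ × ψ for some congruence φ on A with φ₁ ≤ φ ≤ φ₂. -/
/-- An algebraic signature: a type of operation symbols with finite arities. -/
structure Signature where
  ops : Type
  arity : ops → ℕ

/-- An algebra for a signature. -/
structure SAlgebra (S : Signature) where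
  carrier : Type
  interp : (o : S.ops) → (Fin (S.arity o) → carrier) → carrier

namespace SAlgebra

variable {S : Signature}

/-- Binary product of algebras. -/
def prod (A B : SAlgebra S) : SAlgebra S where
  carrier := A.carrier × B.carrier
  interp o x := (A.interp o fun i => (x i).1, B.interp o fun i => (x i).2)

/-- Product of a family of algebras. -/
def pi {ι : Type} (A : ι → SAlgebra S) : SAlgebra S where
  carrier := ∀ i, (A i).carrier
  interp o x i := (A i).interp o fun j => x j i

end SAlgebra

/-- Homomorphisms of algebras. -/
structure SHom {S : Signature} (A B : SAlgebra S) where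
  toFun : A.carrier → B.carrier
  map : ∀ (o : S.ops) (x : Fin (S.arity o) → A.carrier),
    toFun (A.interp o x) = B.interp o fun i => toFun (x i)

namespace SHom

variable {S : Signature}

/-- Composition of homomorphisms. -/
def comp {A B C : SAlgebra S} (g : SHom B C) (f : SHom A B) : SHom A C where
  toFun := g.toFun ∘ f.toFun
  map o x := by simp [Function.comp, f.map, g.map]

/-- The `i`-th projection of a product. -/
def proj {ι : Type} (A : ι → SAlgebra S) (i : ι) : SHom (SAlgebra.pi A) (A i) where
  toFun x := x i
  map _ _ := rfl

end SHom

/-- Congruences of an algebra. -/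
structure SCon {S : Signature} (A : SAlgebra S) where
  r : A.carrier → A.carrier → Prop
  iseqv : Equivalence r
  compat : ∀ (o : S.ops) (x y : Fin (S.arity o) → A.carrier),
    (∀ i, r (x i) (y i)) → r (A.interp o x) (A.interp o y)

namespace SCon

variable {S : Signature} {A : SAlgebra S}

instance : PartialOrder (SCon A) where
  le c d := ∀ x y, c.r x y → d.r x y
  le_refl _ _ _ h := h
  le_trans _ _ _ h h' x y hx := h' x y (h x y hx)
  le_antisymm a b h h' := by
    cases a; cases b
    have : ∀ x y : A.carrier, _ ↔ _ := fun x y => Iff.intro (h x y) (h' x y)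
    simp only [SCon.mk.injEq]
    funext x y
    exact propext (this x y)

instance : InfSet (SCon A) :=
  ⟨fun s =>
    { r := fun x y => ∀ c ∈ s, c.r x y
      iseqv := ⟨fun x c _ => c.iseqv.refl x, fun h c hc => c.iseqv.symm (h c hc),
        fun h1 h2 c hc => c.iseqv.trans (h1 c hc) (h2 c hc)⟩
      compat := fun o x y h c hc => c.compat o x y fun i => h i c hc }⟩

instance : CompleteLattice (SCon A) :=
  completeLatticeOfInf _ (fun s =>
    ⟨fun c hc x y h => h c hc, fun b hb x y h c hc => hb hc x y h⟩)

/-- Restriction (inverse image) of a congruence along a homomorphism. -/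
def comap {B : SAlgebra S} (f : SHom A B) (θ : SCon B) : SCon A where
  r x y := θ.r (f.toFun x) (f.toFun y)
  iseqv := ⟨fun _ => θ.iseqv.refl _, θ.iseqv.symm, θ.iseqv.trans⟩
  compat o x y h := by
    show θ.r (f.toFun (A.interp o x)) (f.toFun (A.interp o y))
    rw [f.map, f.map]
    exact θ.compat o _ _ h

/-- Product of two congruences. -/
def prodCon {A B : SAlgebra S} (φ : SCon A) (ψ : SCon B) : SCon (A.prod B) where
  r x y := φ.r x.1 y.1 ∧ ψ.r x.2 y.2
  iseqv := ⟨fun _ => ⟨φ.iseqv.refl _, ψ.iseqv.refl _⟩,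
    fun h => ⟨φ.iseqv.symm h.1, ψ.iseqv.symm h.2⟩,
    fun h h' => ⟨φ.iseqv.trans h.1 h'.1, ψ.iseqv.trans h.2 h'.2⟩⟩
  compat o x y h := ⟨φ.compat o _ _ fun i => (h i).1, ψ.compat o _ _ fun i => (h i).2⟩

/-- Product of a family of congruences. -/
def piCon {ι : Type} {A : ι → SAlgebra S} (φ : ∀ i, SCon (A i)) : SCon (SAlgebra.pi A) where
  r x y := ∀ i, (φ i).r (x i) (y i)
  iseqv := ⟨fun _ i => (φ i).iseqv.refl _, fun h i => (φ i).iseqv.symm (h i),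
    fun h h' i => (φ i).iseqv.trans (h i) (h' i)⟩
  compat o x y h i := (φ i).compat o _ _ fun j => h j i

end SCon

/-- Terms in `n` variables over a signature. -/
inductive STerm (S : Signature) : ℕ → Type where
  | var : {n : ℕ} → Fin n → STerm S n
  | app : {n : ℕ} → (o : S.ops) → (Fin (S.arity o) → STerm S n) → STerm S n

/-- Evaluation of a term in an algebra. -/
def STerm.eval {S : Signature} (A : SAlgebra S) {n : ℕ} : STerm S n → (Fin n → A.carrier) → A.carrier
  | .var i, x => x i
  | .app o t, x => A.interp o fun j => (t j).eval A x

/-- The term-condition centralizer relation `C(α, β; δ)`. -/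
def Centralizes {S : Signature} (A : SAlgebra S) (α β δ : SCon A) : Prop :=
  ∀ (n m : ℕ) (t : STerm S (n + m)) (a b : Fin n → A.carrier) (u v : Fin m → A.carrier),
    (∀ i, α.r (a i) (b i)) → (∀ j, β.r (u j) (v j)) →
    δ.r (t.eval A (Fin.append a u)) (t.eval A (Fin.append a v)) →
    δ.r (t.eval A (Fin.append b u)) (t.eval A (Fin.append b v))

/-- The commutator `[α, β]`: the least congruence `δ` with `C(α, β; δ)`. -/
def conCommutator {S : Signature} (A : SAlgebra S) (α β : SCon A) : SCon A :=
  sInf {δ | Centralizes A α β δ}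

/-- The center of an algebra: the largest central congruence. -/
def conCenter {S : Signature} (A : SAlgebra S) : SCon A :=
  sSup {θ | conCommutator A θ ⊤ = ⊥}

/-- A class of algebras is a variety iff it is closed under subalgebras
(isomorphic copies included), homomorphic images and products. -/
def IsVariety {S : Signature} (V : SAlgebra S → Prop) : Prop :=
  (∀ (A B : SAlgebra S) (e : SHom A B), Function.Injective e.toFun → V B → V A) ∧
  (∀ (A B : SAlgebra S) (p : SHom A B), Function.Surjective p.toFun → V A → V B) ∧
  (∀ (ι : Type) (A : ι → SAlgebra S), (∀ i, V (A i)) → V (SAlgebra.pi A))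

/-- A congruence modular variety. -/
def IsCongruenceModularVariety {S : Signature} (V : SAlgebra S → Prop) : Prop :=
  IsVariety V ∧ ∀ A : SAlgebra S, V A → IsModularLattice (SCon A)

/-- A Gumm difference term for the class `V`:  `d(x,y,y) = x` holds identically,
and `d(x,x,y) = y` whenever `x θ y` for an abelian congruence `θ`. -/
def IsGummDifferenceTerm {S : Signature} (V : SAlgebra S → Prop) (d : STerm S 3) : Prop :=
  (∀ A : SAlgebra S, V A → ∀ x y : A.carrier, d.eval A ![x, y, y] = x) ∧
  (∀ A : SAlgebra S, V A → ∀ θ : SCon A, conCommutator A θ θ = ⊥ →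
    ∀ x y : A.carrier, θ.r x y → d.eval A ![x, x, y] = y)

/-- `R` is an absolute retract in `V`: every embedding of `R` into a member of `V`
admits a retraction. -/
def IsAbsoluteRetract {S : Signature} (V : SAlgebra S → Prop) (R : SAlgebra S) : Prop :=
  ∀ A : SAlgebra S, V A → ∀ e : SHom R A, Function.Injective e.toFun →
    ∃ p : SHom A R, ∀ x, p.toFun (e.toFun x) = x

/-- An embedding is essential iff every congruence of the codomain restricting
trivially is trivial. -/
def IsEssential {S : Signature} {A B : SAlgebra S} (e : SHom A B) : Prop :=
  ∀ θ : SCon B, SCon.comap e θ = ⊥ → θ = ⊥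

/-- A congruence `α` is dense: any congruence meeting it trivially is trivial. -/
def DenseCon {S : Signature} {A : SAlgebra S} (α : SCon A) : Prop :=
  ∀ θ : SCon A, θ ⊓ α = ⊥ → θ = ⊥

/-- The setoid underlying a congruence. -/
def SCon.setoid {S : Signature} {A : SAlgebra S} (θ : SCon A) : Setoid A.carrier :=
  ⟨θ.r, θ.iseqv⟩

/-- Quotient algebra. -/
noncomputable def SAlgebra.quot {S : Signature} (A : SAlgebra S) (θ : SCon A) : SAlgebra S where
  carrier := Quotient θ.setoid
  interp o x := Quotient.mk θ.setoid (A.interp o fun i => (x i).out)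

theorem SCon.out_rel {S : Signature} {A : SAlgebra S} (θ : SCon A) (a : A.carrier) :
    θ.r (Quotient.out (Quotient.mk θ.setoid a)) a :=
  @Quotient.exact _ θ.setoid _ _ (Quotient.out_eq _)

/-- The canonical quotient homomorphism. -/
def SHom.quotHom {S : Signature} (A : SAlgebra S) (θ : SCon A) : SHom A (A.quot θ) where
  toFun := Quotient.mk θ.setoid
  map o x := Quotient.sound (θ.compat o _ _ fun i => θ.iseqv.symm (θ.out_rel (x i)))

/-- Product map of a family of homomorphisms. -/
def SHom.piMap {S : Signature} {ι : Type} {A B : ι → SAlgebra S} (f : ∀ i, SHom (A i) (B i)) :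
    SHom (SAlgebra.pi A) (SAlgebra.pi B) where
  toFun x i := (f i).toFun (x i)
  map o x := funext fun i => (f i).map o fun j => x j i

/-- The congruence `φ/θ` on the quotient `A/θ`, for `θ ≤ φ`. -/
def SCon.quotCon {S : Signature} {A : SAlgebra S} (θ φ : SCon A) (h : θ ≤ φ) :
    SCon (A.quot θ) where
  r a b := φ.r a.out b.out
  iseqv := ⟨fun _ => φ.iseqv.refl _, φ.iseqv.symm, φ.iseqv.trans⟩
  compat o x y hxy := by
    have hx := h _ _ (θ.out_rel (A.interp o fun i => (x i).out))
    have hy := h _ _ (θ.out_rel (A.interp o fun i => (y i).out))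
    exact φ.iseqv.trans hx (φ.iseqv.trans (φ.compat o _ _ hxy) (φ.iseqv.symm hy))

/-- Finitely subdirectly irreducible: `⊥` is meet irreducible in the congruence lattice. -/
def IsFSI {S : Signature} (A : SAlgebra S) : Prop :=
  ∀ θ φ : SCon A, θ ⊓ φ = ⊥ → θ = ⊥ ∨ φ = ⊥

/-- Subdirectly irreducible: the congruence lattice has a monolith. -/
def IsSubdirectlyIrreducible {S : Signature} (A : SAlgebra S) : Prop :=
  ∃ μ : SCon A, μ ≠ ⊥ ∧ ∀ θ : SCon A, θ ≠ ⊥ → μ ≤ θ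

/-- The all-relation congruence. -/
def allCon {S : Signature} (X : SAlgebra S) : SCon X where
  r _ _ := True
  iseqv := ⟨fun _ => trivial, fun _ => trivial, fun _ _ => trivial⟩
  compat _ _ _ _ := trivial

theorem top_r {S : Signature} {X : SAlgebra S} (x y : X.carrier) : (⊤ : SCon X).r x y :=
  le_top (a := allCon X) x y trivial

/-- If `Con(A × B)` is modular, `φ₁ ≤ φ₂` are congruences on `A` and `ψ` is a congruence
on `B`, then every congruence `θ` on `A × B` with `φ₁ × ψ ≤ θ ≤ φ₂ × ψ` is a product
congruence `φ × ψ` with `φ₁ ≤ φ ≤ φ₂`. -/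
theorem product_congruence_lemma {S : Signature} (A B : SAlgebra S)
    (hmod : IsModularLattice (SCon (A.prod B)))
    (φ₁ φ₂ : SCon A) (hφ : φ₁ ≤ φ₂) (ψ : SCon B) (θ : SCon (A.prod B))
    (h1 : SCon.prodCon φ₁ ψ ≤ θ) (h2 : θ ≤ SCon.prodCon φ₂ ψ) :
    ∃ φ : SCon A, φ₁ ≤ φ ∧ φ ≤ φ₂ ∧ θ = SCon.prodCon φ ψ := by
  haveI := hmod
  set δ : SCon (A.prod B) := θ ⊔ SCon.prodCon φ₁ (⊤ : SCon B) with hδ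
  have hθδ : θ ≤ δ := le_sup_left
  have hφ₁δ : SCon.prodCon φ₁ (⊤ : SCon B) ≤ δ := le_sup_right
  have hinf : SCon.prodCon φ₁ (⊤ : SCon B) ⊓ SCon.prodCon φ₂ ψ = SCon.prodCon φ₁ ψ := by
    apply le_antisymm
    · intro x y hxy
      exact ⟨(inf_le_left (a := SCon.prodCon φ₁ (⊤ : SCon B)) (b := SCon.prodCon φ₂ ψ)
          x y hxy).1,
        (inf_le_right (a := SCon.prodCon φ₁ (⊤ : SCon B)) (b := SCon.prodCon φ₂ ψ)
          x y hxy).2⟩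
    · exact le_inf (fun x y h => ⟨h.1, top_r _ _⟩) (fun x y h => ⟨hφ _ _ h.1, h.2⟩)
  have key : δ ⊓ SCon.prodCon φ₂ ψ = θ := by
    rw [hδ, sup_inf_assoc_of_le _ h2, hinf, sup_eq_left.mpr h1]
  have hcompat : ∀ (o : S.ops) (x y : Fin (S.arity o) → A.carrier),
      (∀ i, φ₂.r (x i) (y i) ∧ ∀ b b', δ.r (x i, b) (y i, b')) →
      φ₂.r (A.interp o x) (A.interp o y) ∧ ∀ b b', δ.r (A.interp o x, b) (A.interp o y, b') := by
    intro o x y hxy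
    refine ⟨φ₂.compat o _ _ fun i => (hxy i).1, fun b b' => ?_⟩
    have hc : δ.r (A.interp o x, B.interp o fun _ => b) (A.interp o y, B.interp o fun _ => b) :=
      δ.compat o (fun i => (x i, b)) (fun i => (y i, b)) (fun i => (hxy i).2 b b)
    have hl : δ.r (A.interp o x, b) (A.interp o x, B.interp o fun _ => b) :=
      hφ₁δ _ _ ⟨φ₁.iseqv.refl _, top_r _ _⟩
    have hr : δ.r (A.interp o y, B.interp o fun _ => b) (A.interp o y, b') :=
      hφ₁δ _ _ ⟨φ₁.iseqv.refl _, top_r _ _⟩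
    exact δ.iseqv.trans hl (δ.iseqv.trans hc hr)
  refine ⟨{ r := fun a a' => φ₂.r a a' ∧ ∀ b b', δ.r (a, b) (a', b')
            iseqv := ⟨fun a => ⟨φ₂.iseqv.refl a,
                fun b b' => hφ₁δ _ _ ⟨φ₁.iseqv.refl a, top_r b b'⟩⟩,
              fun h => ⟨φ₂.iseqv.symm h.1, fun b b' => δ.iseqv.symm (h.2 b' b)⟩,
              fun h h' => ⟨φ₂.iseqv.trans h.1 h'.1,
                fun b b' => δ.iseqv.trans (h.2 b b) (h'.2 b b')⟩⟩
            compat := hcompat }, ?_, ?_, ?_⟩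
  · exact fun a a' h => ⟨hφ a a' h, fun b b' => hφ₁δ _ _ ⟨h, top_r _ _⟩⟩
  · exact fun a a' h => h.1
  · apply le_antisymm
    · intro x y hxy
      refine ⟨⟨(h2 _ _ hxy).1, fun b b' => ?_⟩, (h2 _ _ hxy).2⟩
      have hl : δ.r (x.1, b) (x.1, x.2) := hφ₁δ _ _ ⟨φ₁.iseqv.refl _, top_r _ _⟩
      have hr : δ.r (y.1, y.2) (y.1, b') := hφ₁δ _ _ ⟨φ₁.iseqv.refl _, top_r _ _⟩
      exact δ.iseqv.trans hl (δ.iseqv.trans (hθδ _ _ hxy) hr)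
    · refine key ▸ le_inf (fun x y h => ?_) (fun x y h => ⟨h.1.1, h.2⟩)
      exact h.1.2 x.2 y.2
end

section
/- Let A and B be algebras such that Con(A × B) is a modular lattice. If α is a dense congruence on A and β is a dense congruence on B, then the product congruence α × β is dense on A × B. -/
section ProdDenseHelpers

variable {S : Signature}

lemma SCon.le_def' {A : SAlgebra S} {c d : SCon A} :
    c ≤ d ↔ ∀ x y, c.r x y → d.r x y := Iff.rfl

/-- The diagonal congruence. -/
def SCon.diag (A : SAlgebra S) : SCon A where
  r x y := x = y
  iseqv := ⟨fun _ => rfl, Eq.symm, Eq.trans⟩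
  compat o x y h := by rw [funext h]

lemma SCon.bot_r_iff {A : SAlgebra S} {x y : A.carrier} :
    (⊥ : SCon A).r x y ↔ x = y := by
  constructor
  · intro h
    exact (SCon.le_def'.mp (bot_le : (⊥ : SCon A) ≤ SCon.diag A)) x y h
  · rintro rfl
    exact (⊥ : SCon A).iseqv.refl x

/-- Explicit binary meet of congruences. -/
def SCon.infCon {A : SAlgebra S} (c d : SCon A) : SCon A where
  r x y := c.r x y ∧ d.r x y
  iseqv := ⟨fun x => ⟨c.iseqv.refl x, d.iseqv.refl x⟩,
    fun h => ⟨c.iseqv.symm h.1, d.iseqv.symm h.2⟩,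
    fun h h' => ⟨c.iseqv.trans h.1 h'.1, d.iseqv.trans h.2 h'.2⟩⟩
  compat o x y h := ⟨c.compat o x y fun i => (h i).1, d.compat o x y fun i => (h i).2⟩

lemma SCon.inf_eq' {A : SAlgebra S} (c d : SCon A) : c ⊓ d = SCon.infCon c d :=
  le_antisymm
    (SCon.le_def'.mpr fun x y h =>
      ⟨SCon.le_def'.mp inf_le_left x y h, SCon.le_def'.mp inf_le_right x y h⟩)
    (le_inf (SCon.le_def'.mpr fun _ _ h => h.1) (SCon.le_def'.mpr fun _ _ h => h.2))

lemma SCon.inf_r_iff {A : SAlgebra S} {c d : SCon A} {x y} :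
    (c ⊓ d).r x y ↔ c.r x y ∧ d.r x y := by
  rw [SCon.inf_eq']; exact Iff.rfl

/-- Kernel of the second projection. -/
def SCon.etaTwo (A B : SAlgebra S) : SCon (A.prod B) where
  r x y := x.2 = y.2
  iseqv := ⟨fun _ => rfl, Eq.symm, Eq.trans⟩
  compat o x y h := congrArg (B.interp o) (funext h)

/-- Kernel of the first projection. -/
def SCon.etaOne (A B : SAlgebra S) : SCon (A.prod B) where
  r x y := x.1 = y.1
  iseqv := ⟨fun _ => rfl, Eq.symm, Eq.trans⟩
  compat o x y h := congrArg (A.interp o) (funext h)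

/-- The congruence `⊤ × β` on `A × B`. -/
def SCon.hatB (A : SAlgebra S) {B : SAlgebra S} (β : SCon B) : SCon (A.prod B) where
  r x y := β.r x.2 y.2
  iseqv := ⟨fun _ => β.iseqv.refl _, β.iseqv.symm, β.iseqv.trans⟩
  compat o x y h := β.compat o _ _ h

/-- The congruence `α × ⊤` on `A × B`. -/
def SCon.hatA {A : SAlgebra S} (B : SAlgebra S) (α : SCon A) : SCon (A.prod B) where
  r x y := α.r x.1 y.1
  iseqv := ⟨fun _ => α.iseqv.refl _, α.iseqv.symm, α.iseqv.trans⟩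
  compat o x y h := α.compat o _ _ h

lemma keyB {A B : SAlgebra S} (hmod : IsModularLattice (SCon (A.prod B)))
    (hA : Nonempty A.carrier) (β : SCon B) (hβ : DenseCon β)
    (δ : SCon (A.prod B)) (hd : δ ⊓ SCon.hatB A β = ⊥) :
    ∀ x y, δ.r x y → x.2 = y.2 := by
  haveI := hmod
  set ζ := SCon.etaTwo A B ⊔ δ with hζ
  have hle : SCon.etaTwo A B ≤ SCon.hatB A β :=
    SCon.le_def'.mpr fun x y h => by
      show β.r x.2 y.2; rw [show x.2 = y.2 from h]; exact β.iseqv.refl _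
  have hmeq : ζ ⊓ SCon.hatB A β = SCon.etaTwo A B := by
    rw [hζ, sup_inf_assoc_of_le δ hle, hd, sup_bot_eq]
  obtain ⟨a0⟩ := hA
  have hetale : SCon.etaTwo A B ≤ ζ := le_sup_left
  have hδle : δ ≤ ζ := le_sup_right
  let ψ : SCon B :=
    { r := fun b b' => ∃ a a' : A.carrier, ζ.r (a, b) (a', b')
      iseqv := ⟨fun b => ⟨a0, a0, ζ.iseqv.refl _⟩,
        fun ⟨a, a', h⟩ => ⟨a', a, ζ.iseqv.symm h⟩,
        fun {b1 b2 b3} ⟨a, a', h⟩ ⟨c, c', h'⟩ => ⟨a, c', ζ.iseqv.trans h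
          (ζ.iseqv.trans (SCon.le_def'.mp hetale (a', b2) (c, b2) rfl) h')⟩⟩
      compat := fun o x y h => by
        choose a a' hh using h
        exact ⟨A.interp o a, A.interp o a',
          ζ.compat o (fun i => (a i, x i)) (fun i => (a' i, y i)) hh⟩ }
  have hψβ : ψ ⊓ β = ⊥ := by
    refine le_antisymm (SCon.le_def'.mpr fun b b' h => ?_) bot_le
    obtain ⟨⟨a, a', hz⟩, hb⟩ := SCon.inf_r_iff.mp h
    have hmem : (ζ ⊓ SCon.hatB A β).r (a, b) (a', b') := SCon.inf_r_iff.mpr ⟨hz, hb⟩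
    rw [hmeq] at hmem
    exact SCon.bot_r_iff.mpr hmem
  have hψ := hβ ψ hψβ
  intro x y hxy
  have hx : ψ.r x.2 y.2 := ⟨x.1, y.1, SCon.le_def'.mp hδle _ _ hxy⟩
  rw [hψ] at hx
  exact SCon.bot_r_iff.mp hx

lemma keyA {A B : SAlgebra S} (hmod : IsModularLattice (SCon (A.prod B)))
    (hB : Nonempty B.carrier) (α : SCon A) (hα : DenseCon α)
    (δ : SCon (A.prod B)) (hd : δ ⊓ SCon.hatA B α = ⊥) :
    ∀ x y, δ.r x y → x.1 = y.1 := by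
  haveI := hmod
  set ζ := SCon.etaOne A B ⊔ δ with hζ
  have hle : SCon.etaOne A B ≤ SCon.hatA B α :=
    SCon.le_def'.mpr fun x y h => by
      show α.r x.1 y.1; rw [show x.1 = y.1 from h]; exact α.iseqv.refl _
  have hmeq : ζ ⊓ SCon.hatA B α = SCon.etaOne A B := by
    rw [hζ, sup_inf_assoc_of_le δ hle, hd, sup_bot_eq]
  obtain ⟨b0⟩ := hB
  have hetale : SCon.etaOne A B ≤ ζ := le_sup_left
  have hδle : δ ≤ ζ := le_sup_right
  let ψ : SCon A :=
    { r := fun a a' => ∃ b b' : B.carrier, ζ.r (a, b) (a', b')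
      iseqv := ⟨fun a => ⟨b0, b0, ζ.iseqv.refl _⟩,
        fun ⟨b, b', h⟩ => ⟨b', b, ζ.iseqv.symm h⟩,
        fun {a1 a2 a3} ⟨b, b', h⟩ ⟨c, c', h'⟩ => ⟨b, c', ζ.iseqv.trans h
          (ζ.iseqv.trans (SCon.le_def'.mp hetale (a2, b') (a2, c) rfl) h')⟩⟩
      compat := fun o x y h => by
        choose b b' hh using h
        exact ⟨B.interp o b, B.interp o b',
          ζ.compat o (fun i => (x i, b i)) (fun i => (y i, b' i)) hh⟩ }
  have hψα : ψ ⊓ α = ⊥ := by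
    refine le_antisymm (SCon.le_def'.mpr fun a a' h => ?_) bot_le
    obtain ⟨⟨b, b', hz⟩, hb⟩ := SCon.inf_r_iff.mp h
    have hmem : (ζ ⊓ SCon.hatA B α).r (a, b) (a', b') := SCon.inf_r_iff.mpr ⟨hz, hb⟩
    rw [hmeq] at hmem
    exact SCon.bot_r_iff.mpr hmem
  have hψ := hα ψ hψα
  intro x y hxy
  have hx : ψ.r x.1 y.1 := ⟨x.2, y.2, SCon.le_def'.mp hδle _ _ hxy⟩
  rw [hψ] at hx
  exact SCon.bot_r_iff.mp hx

end ProdDenseHelpers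


/-- If `Con(A × B)` is modular and `α`, `β` are dense congruences on `A` and `B`
respectively, then `α × β` is dense on `A × B`. -/
theorem prod_dense {S : Signature} (A B : SAlgebra S)
    (hmod : IsModularLattice (SCon (A.prod B)))
    (α : SCon A) (β : SCon B) (hα : DenseCon α) (hβ : DenseCon β) :
    DenseCon (SCon.prodCon α β) := by
  intro θ hθ
  by_cases hA : Nonempty A.carrier
  · by_cases hB : Nonempty B.carrier
    · have hprod : ∀ x y, θ.r x y → α.r x.1 y.1 → β.r x.2 y.2 → x = y := by
        intro x y h1 h2 h3
        have h4 : (θ ⊓ SCon.prodCon α β).r x y := SCon.inf_r_iff.mpr ⟨h1, ⟨h2, h3⟩⟩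
        rw [hθ] at h4
        exact SCon.bot_r_iff.mp h4
      have h1 : (θ ⊓ SCon.hatA B α) ⊓ SCon.hatB A β = ⊥ := by
        refine le_antisymm (SCon.le_def'.mpr fun x y h => ?_) bot_le
        obtain ⟨h1, h2⟩ := SCon.inf_r_iff.mp h
        obtain ⟨h3, h4⟩ := SCon.inf_r_iff.mp h1
        exact SCon.bot_r_iff.mpr (hprod x y h3 h4 h2)
      have h2 : θ ⊓ SCon.hatA B α = ⊥ := by
        have hsnd := keyB hmod hA β hβ _ h1
        refine le_antisymm (SCon.le_def'.mpr fun x y h => ?_) bot_le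
        obtain ⟨h3, h4⟩ := SCon.inf_r_iff.mp h
        have h5 := hsnd x y h
        refine SCon.bot_r_iff.mpr (hprod x y h3 h4 ?_)
        rw [h5]; exact β.iseqv.refl _
      have h1' : (θ ⊓ SCon.hatB A β) ⊓ SCon.hatA B α = ⊥ := by
        refine le_antisymm (SCon.le_def'.mpr fun x y h => ?_) bot_le
        obtain ⟨h1, h2⟩ := SCon.inf_r_iff.mp h
        obtain ⟨h3, h4⟩ := SCon.inf_r_iff.mp h1
        exact SCon.bot_r_iff.mpr (hprod x y h3 h2 h4)
      have h2' : θ ⊓ SCon.hatB A β = ⊥ := by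
        have hfst := keyA hmod hB α hα _ h1'
        refine le_antisymm (SCon.le_def'.mpr fun x y h => ?_) bot_le
        obtain ⟨h3, h4⟩ := SCon.inf_r_iff.mp h
        have h5 := hfst x y h
        refine SCon.bot_r_iff.mpr (hprod x y h3 ?_ h4)
        rw [h5]; exact α.iseqv.refl _
      have hsnd := keyB hmod hA β hβ θ h2'
      have hfst := keyA hmod hB α hα θ h2
      refine le_antisymm (SCon.le_def'.mpr fun x y h => ?_) bot_le
      exact SCon.bot_r_iff.mpr (Prod.ext (hfst x y h) (hsnd x y h))
    · refine le_antisymm (SCon.le_def'.mpr fun x y h => absurd ⟨x.2⟩ hB) bot_le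
  · refine le_antisymm (SCon.le_def'.mpr fun x y h => absurd ⟨x.1⟩ hA) bot_le
end

section
/- An algebra R in a variety V is an absolute retract in V if and only if R has no proper essential extensions in V. -/
section Aux

variable {S : Signature}

/-- The diagonal congruence. -/
def SCon.eqCon (A : SAlgebra S) : SCon A where
  r := Eq
  iseqv := ⟨fun _ => rfl, Eq.symm, Eq.trans⟩
  compat o x y h := by rw [funext h]

theorem SCon.bot_r {A : SAlgebra S} {x y : A.carrier} (h : (⊥ : SCon A).r x y) : x = y :=
  (bot_le : (⊥ : SCon A) ≤ SCon.eqCon A) x y h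

theorem SCon.eq_bot_iff' {A : SAlgebra S} (θ : SCon A) :
    θ = ⊥ ↔ ∀ x y, θ.r x y → x = y := by
  constructor
  · intro h x y hxy; exact SCon.bot_r (h ▸ hxy)
  · intro h
    refine le_antisymm (fun x y hxy => ?_) bot_le
    exact (h x y hxy) ▸ (⊥ : SCon A).iseqv.refl x

theorem SCon.chain_bound {A : SAlgebra S} {c : Set (SCon A)} (hc : IsChain (· ≤ ·) c)
    {c0 : SCon A} (h0 : c0 ∈ c) :
    ∀ {n : ℕ} (f : Fin n → SCon A), (∀ i, f i ∈ c) → ∃ θ ∈ c, ∀ i, f i ≤ θ := by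
  intro n
  induction n with
  | zero => exact fun f _ => ⟨c0, h0, fun i => i.elim0⟩
  | succ n ih =>
    intro f hf
    obtain ⟨θ, hθc, hθ⟩ := ih (fun i => f i.succ) (fun i => hf _)
    rcases eq_or_ne (f 0) θ with h | h
    · exact ⟨θ, hθc, fun i => Fin.cases (h ▸ le_refl _) hθ i⟩
    · rcases hc (hf 0) hθc h with h' | h'
      · exact ⟨θ, hθc, fun i => Fin.cases h' hθ i⟩
      · exact ⟨f 0, hf 0, fun i => Fin.cases (le_refl _) (fun j => le_trans (hθ j) h') i⟩

/-- Union of a nonempty chain of congruences. -/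
def SCon.chainSup {A : SAlgebra S} (c : Set (SCon A)) (hc : IsChain (· ≤ ·) c)
    (c0 : SCon A) (h0 : c0 ∈ c) : SCon A where
  r x y := ∃ θ ∈ c, θ.r x y
  iseqv := by
    refine ⟨fun x => ⟨c0, h0, c0.iseqv.refl x⟩, ?_, ?_⟩
    · rintro x y ⟨θ, hθ, h⟩; exact ⟨θ, hθ, θ.iseqv.symm h⟩
    · rintro x y z ⟨θ₁, h₁, hr₁⟩ ⟨θ₂, h₂, hr₂⟩
      rcases eq_or_ne θ₁ θ₂ with h | h
      · exact ⟨θ₂, h₂, θ₂.iseqv.trans (h ▸ hr₁) hr₂⟩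
      · rcases hc h₁ h₂ h with h' | h'
        · exact ⟨θ₂, h₂, θ₂.iseqv.trans (h' _ _ hr₁) hr₂⟩
        · exact ⟨θ₁, h₁, θ₁.iseqv.trans hr₁ (h' _ _ hr₂)⟩
  compat := by
    intro o x y h
    choose g hg hgr using h
    obtain ⟨θ, hθc, hθ⟩ := SCon.chain_bound hc h0 g hg
    exact ⟨θ, hθc, θ.compat o x y fun i => hθ i _ _ (hgr i)⟩

theorem SCon.le_chainSup {A : SAlgebra S} {c : Set (SCon A)} (hc : IsChain (· ≤ ·) c)
    {c0 : SCon A} (h0 : c0 ∈ c) {θ : SCon A} (hθ : θ ∈ c) : θ ≤ SCon.chainSup c hc c0 h0 :=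
  fun x y h => ⟨θ, hθ, h⟩

end Aux

/-- An algebra `R` in a variety `V` is an absolute retract in `V` iff `R` has no proper
essential extensions in `V`. -/
theorem absoluteRetract_iff_no_proper_essential_extension {S : Signature}
    (V : SAlgebra S → Prop) (hV : IsVariety V) (R : SAlgebra S) (hR : V R) :
    IsAbsoluteRetract V R ↔
      ¬ ∃ (B : SAlgebra S) (e : SHom R B), V B ∧ Function.Injective e.toFun ∧
          IsEssential e ∧ ¬ Function.Surjective e.toFun := by

  constructor
  · rintro hAR ⟨B, e, hVB, hinj, hess, hnsurj⟩
    obtain ⟨p, hp⟩ := hAR B hVB e hinj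
    -- the kernel of p restricts trivially, hence is trivial, so p is injective
    set θ : SCon B := {
      r := fun a b => p.toFun a = p.toFun b
      iseqv := ⟨fun _ => rfl, Eq.symm, Eq.trans⟩
      compat := fun o x y h => by
        show p.toFun (B.interp o x) = p.toFun (B.interp o y)
        rw [p.map, p.map, funext h] } with hθdef
    have hcom : SCon.comap e θ = ⊥ := by
      rw [SCon.eq_bot_iff']
      intro x y hxy
      have : p.toFun (e.toFun x) = p.toFun (e.toFun y) := hxy
      rwa [hp, hp] at this
    have hbot := hess θ hcom
    have hpinj : Function.Injective p.toFun := by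
      intro a b hab
      exact SCon.bot_r (hbot ▸ (hab : θ.r a b))
    apply hnsurj
    intro b
    refine ⟨p.toFun b, hpinj ?_⟩
    rw [hp]
  · intro hno A hVA e hinj
    -- Zorn: maximal congruence of A restricting trivially to R
    set s : Set (SCon A) := {θ | SCon.comap e θ = ⊥} with hs
    have hbots : (⊥ : SCon A) ∈ s := by
      rw [Set.mem_setOf_eq, SCon.eq_bot_iff']
      intro x y hxy
      exact hinj (SCon.bot_r hxy)
    obtain ⟨θ, hθmax⟩ := zorn_le₀ s (by
      intro c hcs hc
      rcases c.eq_empty_or_nonempty with rfl | ⟨c0, h0⟩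
      · exact ⟨⊥, hbots, fun z hz => hz.elim⟩
      refine ⟨SCon.chainSup c hc c0 h0, ?_, fun z hz => SCon.le_chainSup hc h0 hz⟩
      rw [Set.mem_setOf_eq, SCon.eq_bot_iff']
      rintro x y ⟨ψ, hψc, hψ⟩
      have := hcs hψc
      rw [Set.mem_setOf_eq, SCon.eq_bot_iff'] at this
      exact this x y hψ)
    have hθs : SCon.comap e θ = ⊥ := hθmax.1
    set q := SHom.quotHom A θ with hq
    set f := SHom.comp q e with hf
    have hqsurj : Function.Surjective q.toFun := fun b => ⟨b.out, Quotient.out_eq b⟩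
    have hVQ : V (A.quot θ) := hV.2.1 A (A.quot θ) q hqsurj hVA
    have hfinj : Function.Injective f.toFun := by
      intro x y hxy
      have hrel : θ.r (e.toFun x) (e.toFun y) := Quotient.exact hxy
      exact SCon.bot_r (hθs ▸ (hrel : (SCon.comap e θ).r x y))
    have hfess : IsEssential f := by
      intro ψ hψ
      have hθφ : θ ≤ SCon.comap q ψ := by
        intro a b hab
        show ψ.r (q.toFun a) (q.toFun b)
        have : q.toFun a = q.toFun b := Quotient.sound hab
        rw [this]
        exact ψ.iseqv.refl _
      have hφs : SCon.comap q ψ ∈ s := by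
        rw [Set.mem_setOf_eq, SCon.eq_bot_iff']
        rw [SCon.eq_bot_iff'] at hψ
        intro x y hxy
        exact hψ x y hxy
      have hφθ : SCon.comap q ψ = θ := le_antisymm (hθmax.2 hφs hθφ) hθφ
      rw [SCon.eq_bot_iff']
      intro a b hab
      have h2 : (SCon.comap q ψ).r a.out b.out := by
        show ψ.r (Quotient.mk θ.setoid a.out) (Quotient.mk θ.setoid b.out)
        have ha : Quotient.mk θ.setoid (Quotient.out (s := θ.setoid) a) = a := Quotient.out_eq (s := θ.setoid) a
        have hb : Quotient.mk θ.setoid (Quotient.out (s := θ.setoid) b) = b := Quotient.out_eq (s := θ.setoid) b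
        rwa [ha, hb]
      rw [hφθ] at h2
      calc (show Quotient θ.setoid from a) = Quotient.mk θ.setoid a.out := (Quotient.out_eq a).symm
        _ = Quotient.mk θ.setoid b.out := Quotient.sound h2
        _ = (show Quotient θ.setoid from b) := Quotient.out_eq b
    have hfsurj : Function.Surjective f.toFun := by
      by_contra h
      exact hno ⟨A.quot θ, f, hVQ, hfinj, hfess, h⟩
    -- inverse of the bijective homomorphism f
    have hbij : Function.Bijective f.toFun := ⟨hfinj, hfsurj⟩
    have hgf : ∀ x, Function.surjInv hfsurj (f.toFun x) = x :=
      Function.leftInverse_surjInv hbij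
    have hfg : ∀ b, f.toFun (Function.surjInv hfsurj b) = b :=
      Function.surjInv_eq hfsurj
    refine ⟨SHom.comp {
      toFun := Function.surjInv hfsurj
      map := fun o x => hfinj (by
        rw [hfg, f.map]
        congr 1
        funext i
        rw [hfg]) } q, fun x => ?_⟩
    exact hgf x
end

section
/- Suppose f: B → ∏_{i=1}^n B_i is a product-essential embedding in a congruence modular variety, and θ is a congruence on ∏ B_i whose restriction to (the image of) B is 0_B. Then θ is a central congruence on ∏ B_i. -/
namespace PEaux

variable {S : Signature}

/-- The equality congruence. -/
def eqCon (A : SAlgebra S) : SCon A where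
  r x y := x = y
  iseqv := ⟨fun _ => rfl, Eq.symm, Eq.trans⟩
  compat o x y h := by rw [funext h]

theorem bot_r {A : SAlgebra S} {x y : A.carrier} : (⊥ : SCon A).r x y ↔ x = y :=
  ⟨fun h => (bot_le : (⊥ : SCon A) ≤ eqCon A) x y h,
   fun h => h ▸ (⊥ : SCon A).iseqv.refl x⟩

/-- Intersection of two congruences. -/
def interCon {A : SAlgebra S} (γ δ : SCon A) : SCon A where
  r x y := γ.r x y ∧ δ.r x y
  iseqv := ⟨fun x => ⟨γ.iseqv.refl x, δ.iseqv.refl x⟩,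
    fun h => ⟨γ.iseqv.symm h.1, δ.iseqv.symm h.2⟩,
    fun h h' => ⟨γ.iseqv.trans h.1 h'.1, δ.iseqv.trans h.2 h'.2⟩⟩
  compat o x y h := ⟨γ.compat o x y fun i => (h i).1, δ.compat o x y fun i => (h i).2⟩

theorem inf_r_intro {A : SAlgebra S} {γ δ : SCon A} {x y : A.carrier}
    (h1 : γ.r x y) (h2 : δ.r x y) : (γ ⊓ δ).r x y :=
  (le_inf (show interCon γ δ ≤ γ from fun _ _ h => h.1)
    (show interCon γ δ ≤ δ from fun _ _ h => h.2) : interCon γ δ ≤ γ ⊓ δ) x y ⟨h1, h2⟩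

/-- Gumm's Shifting Lemma, from modularity of the congruence lattice. -/
theorem shifting {A : SAlgebra S} (hmod : IsModularLattice (SCon A))
    (α β θ : SCon A) (hαβ : α ⊓ β ≤ θ) {a b c d : A.carrier}
    (hab : β.r a b) (hcd : β.r c d) (hac : α.r a c) (hbd : α.r b d)
    (hθ : θ.r a b) : θ.r c d := by
  haveI := hmod
  have l1 : α ≤ (β ⊓ θ) ⊔ α := le_sup_right
  have l2 : β ⊓ θ ≤ (β ⊓ θ) ⊔ α := le_sup_left
  have h1 : ((β ⊓ θ) ⊔ α).r c d :=
    ((β ⊓ θ) ⊔ α).iseqv.trans (l1 _ _ (α.iseqv.symm hac))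
      (((β ⊓ θ) ⊔ α).iseqv.trans (l2 _ _ (inf_r_intro hab hθ)) (l1 _ _ hbd))
  have h2 : (((β ⊓ θ) ⊔ α) ⊓ β).r c d := inf_r_intro h1 hcd
  have heq : ((β ⊓ θ) ⊔ α) ⊓ β = (β ⊓ θ) ⊔ (α ⊓ β) :=
    sup_inf_assoc_of_le α inf_le_left
  rw [heq] at h2
  exact (sup_le inf_le_right hαβ : (β ⊓ θ) ⊔ (α ⊓ β) ≤ θ) c d h2

end PEaux
namespace PEaux

variable {S : Signature} {n : ℕ} {Bi : Fin n → SAlgebra S}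

/-- Kernel of the i-th projection: equal i-th coordinate. -/
def coordEq (Bi : Fin n → SAlgebra S) (i : Fin n) : SCon (SAlgebra.pi Bi) where
  r x y := x i = y i
  iseqv := ⟨fun _ => rfl, Eq.symm, Eq.trans⟩
  compat o x y h :=
    show (Bi i).interp o (fun j => x j i) = (Bi i).interp o (fun j => y j i) from
      congrArg _ (funext fun j => h j)

/-- Equality in all coordinates except i. -/
def offEq (Bi : Fin n → SAlgebra S) (i : Fin n) : SCon (SAlgebra.pi Bi) where
  r x y := ∀ j, j ≠ i → x j = y j
  iseqv := ⟨fun _ _ _ => rfl, fun h j hj => (h j hj).symm,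
    fun h h' j hj => (h j hj).trans (h' j hj)⟩
  compat o x y h := fun j hj =>
    show (Bi j).interp o (fun k => x k j) = (Bi j).interp o (fun k => y k j) from
      congrArg _ (funext fun k => h k j hj)

theorem coord_off_le (θ : SCon (SAlgebra.pi Bi)) (i : Fin n) :
    coordEq Bi i ⊓ offEq Bi i ≤ θ := fun x y h => by
  have h1 : x i = y i := inf_le_left (a := coordEq Bi i) (b := offEq Bi i) x y h
  have h2 : ∀ j, j ≠ i → x j = y j := inf_le_right (a := coordEq Bi i) (b := offEq Bi i) x y h
  have hxy : x = y := funext fun j => by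
    by_cases hj : j = i
    · subst hj; exact h1
    · exact h2 j hj
  exact hxy ▸ θ.iseqv.refl x

/-- Transfer a θ-relation between pairs differing in one coordinate. -/
theorem off_transfer (hmod : IsModularLattice (SCon (SAlgebra.pi Bi)))
    (θ : SCon (SAlgebra.pi Bi)) (i : Fin n)
    {p q c d : ∀ j, (Bi j).carrier}
    (hpq : ∀ j, j ≠ i → p j = q j) (hcd : ∀ j, j ≠ i → c j = d j)
    (hpc : p i = c i) (hqd : q i = d i) (h : θ.r p q) : θ.r c d :=
  shifting hmod (coordEq Bi i) (offEq Bi i) θ (coord_off_le θ i) hpq hcd hpc hqd h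

/-- Coordinatewise evaluation in a product. -/
theorem eval_apply {N : ℕ} (i : Fin n) :
    ∀ (t : STerm S N) (w : Fin N → ∀ j, (Bi j).carrier),
      (t.eval (SAlgebra.pi Bi) w) i = t.eval (Bi i) (fun l => w l i)
  | .var l, w => rfl
  | .app o ts, w =>
    show (Bi i).interp o (fun j => ((ts j).eval (SAlgebra.pi Bi) w) i) = _ from
      congrArg _ (funext fun j => eval_apply i (ts j) w)

/-- Terms are compatible with congruences. -/
theorem eval_rel {A : SAlgebra S} (θ : SCon A) {N : ℕ} :
    ∀ (t : STerm S N) (x y : Fin N → A.carrier),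
      (∀ l, θ.r (x l) (y l)) → θ.r (t.eval A x) (t.eval A y)
  | .var l, x, y, h => h l
  | .app o ts, x, y, h => θ.compat o _ _ fun j => eval_rel θ (ts j) x y h

theorem append_apply {N M : ℕ} (a : Fin N → ∀ j, (Bi j).carrier)
    (u : Fin M → ∀ j, (Bi j).carrier) (i : Fin n) :
    (fun l => Fin.append a u l i)
      = Fin.append (fun j => a j i) (fun j => u j i) := by
  funext l
  refine Fin.addCases (fun j => ?_) (fun j => ?_) l <;>
    simp [Fin.append_left, Fin.append_right]

/-- The coordinate congruence induced by θ. -/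
def phiCon (hmod : IsModularLattice (SCon (SAlgebra.pi Bi)))
    (θ : SCon (SAlgebra.pi Bi)) (i : Fin n) : SCon (Bi i) where
  r x y := ∀ w, θ.r (Function.update w i x) (Function.update w i y)
  iseqv := ⟨fun _ w => θ.iseqv.refl _, fun h w => θ.iseqv.symm (h w),
    fun h1 h2 w => θ.iseqv.trans (h1 w) (h2 w)⟩
  compat o x y h := fun w => by
    let w' : ∀ j, (Bi j).carrier := fun j => (Bi j).interp o (fun _ => w j)
    have key : ∀ z : Fin (S.arity o) → (Bi i).carrier,
        (SAlgebra.pi Bi).interp o (fun k => Function.update w i (z k))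
          = Function.update w' i ((Bi i).interp o z) := by
      intro z
      funext j
      by_cases hj : j = i
      · subst hj
        show (Bi j).interp o (fun k => Function.update w j (z k) j) = _
        rw [Function.update_self]
        exact congrArg _ (funext fun k => Function.update_self j (z k) w)
      · show (Bi j).interp o (fun k => Function.update w i (z k) j) = _
        rw [Function.update_of_ne hj]
        exact congrArg _ (funext fun k => Function.update_of_ne hj (z k) w)
    have h' : θ.r (Function.update w' i ((Bi i).interp o x))
        (Function.update w' i ((Bi i).interp o y)) := by
      have := θ.compat o _ _ (fun k => h k w)
      rwa [key x, key y] at this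
    refine off_transfer hmod θ i ?_ ?_ ?_ ?_ h'
    · intro j hj; rw [Function.update_of_ne hj, Function.update_of_ne hj]
    · intro j hj; rw [Function.update_of_ne hj, Function.update_of_ne hj]
    · rw [Function.update_self, Function.update_self]
    · rw [Function.update_self, Function.update_self]

end PEaux
namespace PEaux

variable {S : Signature} {n : ℕ} {Bi : Fin n → SAlgebra S}

/-- Mixed tuple: first `k` coordinates from `y`, rest from `x`. -/
def mix (x y : ∀ j, (Bi j).carrier) (k : ℕ) : ∀ j, (Bi j).carrier :=
  fun j => if (j : ℕ) < k then y j else x j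

theorem mix_zero (x y : ∀ j, (Bi j).carrier) : mix x y 0 = x :=
  funext fun j => if_neg (Nat.not_lt_zero _)

theorem mix_top (x y : ∀ j, (Bi j).carrier) : mix x y n = y :=
  funext fun j => if_pos j.isLt

theorem mix_succ_of_ge (x y : ∀ j, (Bi j).carrier) {k : ℕ} (hk : n ≤ k) :
    mix x y (k + 1) = mix x y k := funext fun j => by
  have h : (j : ℕ) < k := lt_of_lt_of_le j.isLt hk
  show (if (j:ℕ) < k + 1 then y j else x j) = (if (j:ℕ) < k then y j else x j)
  rw [if_pos h, if_pos (Nat.lt_succ_of_lt h)]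

theorem mix_apply_ne (x y : ∀ j, (Bi j).carrier) {k : ℕ} {j : Fin n}
    (hj : (j : ℕ) ≠ k) : mix x y (k + 1) j = mix x y k j := by
  show (if (j:ℕ) < k + 1 then y j else x j) = (if (j:ℕ) < k then y j else x j)
  by_cases h2 : (j : ℕ) < k
  · rw [if_pos h2, if_pos (Nat.lt_succ_of_lt h2)]
  · rw [if_neg h2, if_neg (by omega)]

theorem update_mix_self (x y : ∀ j, (Bi j).carrier) (k : ℕ) (hk : k < n) :
    Function.update (mix x y k) ⟨k, hk⟩ (x ⟨k, hk⟩) = mix x y k := by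
  funext j
  by_cases hj : j = ⟨k, hk⟩
  · subst hj
    rw [Function.update_self]
    exact (if_neg (lt_irrefl k)).symm
  · rw [Function.update_of_ne hj]

theorem update_mix_succ (x y : ∀ j, (Bi j).carrier) (k : ℕ) (hk : k < n) :
    Function.update (mix x y k) ⟨k, hk⟩ (y ⟨k, hk⟩) = mix x y (k + 1) := by
  funext j
  by_cases hj : j = ⟨k, hk⟩
  · subst hj
    rw [Function.update_self]
    exact (if_pos (Nat.lt_succ_self _)).symm
  · rw [Function.update_of_ne hj]
    exact (mix_apply_ne x y (fun h => hj (Fin.ext h))).symm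

/-- If every single-coordinate replacement step is in θ, then the pair is in θ. -/
theorem chain_eq (θ : SCon (SAlgebra.pi Bi)) (x y : ∀ j, (Bi j).carrier)
    (h : ∀ (i : Fin n) (w : ∀ j, (Bi j).carrier),
      θ.r (Function.update w i (x i)) (Function.update w i (y i))) :
    θ.r x y := by
  have hstep : ∀ k, θ.r (mix x y k) (mix x y (k + 1)) := by
    intro k
    by_cases hk : k < n
    · have h1 := h ⟨k, hk⟩ (mix x y k)
      rwa [update_mix_self, update_mix_succ] at h1
    · rw [mix_succ_of_ge x y (le_of_not_gt hk)]
      exact θ.iseqv.refl _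
  have hall : ∀ k, θ.r x (mix x y k) := by
    intro k
    induction k with
    | zero => rw [mix_zero]; exact θ.iseqv.refl x
    | succ k ih => exact θ.iseqv.trans ih (hstep k)
  have h2 := hall n
  rwa [mix_top] at h2

end PEaux
/-- If `f : B → ∏ Bᵢ` is a product-essential embedding in a congruence modular variety
and `θ` is a congruence on `∏ Bᵢ` restricting trivially to `B`, then `θ` is central. -/
theorem product_essential_restriction_central {S : Signature}
    (V : SAlgebra S → Prop) (hV : IsCongruenceModularVariety V)
    (n : ℕ) (B : SAlgebra S) (Bi : Fin n → SAlgebra S)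
    (hB : V B) (hBi : ∀ i, V (Bi i))
    (f : SHom B (SAlgebra.pi Bi)) (hinj : Function.Injective f.toFun)
    (hpe : ∀ φ : ∀ i, SCon (Bi i), SCon.comap f (SCon.piCon φ) = ⊥ → ∀ i, φ i = ⊥)
    (θ : SCon (SAlgebra.pi Bi)) (hres : SCon.comap f θ = ⊥) :
    conCommutator (SAlgebra.pi Bi) θ ⊤ = ⊥ := by
  classical
  have hmod : IsModularLattice (SCon (SAlgebra.pi Bi)) :=
    hV.2 _ (hV.1.2.2 (Fin n) Bi hBi)
  set φ : ∀ i, SCon (Bi i) := fun i => PEaux.phiCon hmod θ i with hφdef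
  -- the restriction of `piCon φ` to `B` is trivial
  have hφres : SCon.comap f (SCon.piCon φ) = ⊥ := by
    refine le_antisymm (fun x y hxy => ?_) bot_le
    have hθxy : θ.r (f.toFun x) (f.toFun y) :=
      PEaux.chain_eq θ _ _ (fun i w => hxy i w)
    have h2 : (SCon.comap f θ).r x y := hθxy
    rw [hres] at h2
    exact h2
  have hφbot : ∀ i, φ i = ⊥ := hpe φ hφres
  -- key: θ-related tuples differing in only one coordinate are equal
  have key : ∀ (i : Fin n) (p q : ∀ j, (Bi j).carrier),
      θ.r p q → (∀ j, j ≠ i → p j = q j) → p = q := by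
    intro i p q hpq hoff
    have hphi : (φ i).r (p i) (q i) := fun w =>
      PEaux.off_transfer hmod θ i hoff
        (fun j hj => by rw [Function.update_of_ne hj, Function.update_of_ne hj])
        (Function.update_self i (p i) w).symm
        (Function.update_self i (q i) w).symm hpq
    rw [hφbot i] at hphi
    have hpi : p i = q i := PEaux.bot_r.mp hphi
    funext j
    by_cases hj : j = i
    · subst hj; exact hpi
    · exact hoff j hj
  -- θ centralizes ⊤ modulo ⊥
  have hcent : Centralizes (SAlgebra.pi Bi) θ ⊤ ⊥ := by
    intro N M t a b u v ha _ h0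
    have heq : t.eval (SAlgebra.pi Bi) (Fin.append a u)
        = t.eval (SAlgebra.pi Bi) (Fin.append a v) := PEaux.bot_r.mp h0
    refine PEaux.bot_r.mpr ?_
    set m : ℕ → Fin M → (SAlgebra.pi Bi).carrier :=
      fun k j => PEaux.mix (u j) (v j) k with hmdef
    -- all a-side evaluations agree
    have hs : ∀ k, t.eval (SAlgebra.pi Bi) (Fin.append a (m k))
        = t.eval (SAlgebra.pi Bi) (Fin.append a u) := by
      intro k
      funext i
      erw [PEaux.eval_apply, PEaux.eval_apply, PEaux.append_apply, PEaux.append_apply]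
      by_cases hik : (i : ℕ) < k
      · have hm : (fun j => m k j i) = fun j => v j i := funext fun j => if_pos hik
        rw [hm]
        have h3 := congrFun heq i
        erw [PEaux.eval_apply, PEaux.eval_apply, PEaux.append_apply,
          PEaux.append_apply] at h3
        exact h3.symm
      · have hm : (fun j => m k j i) = fun j => u j i := funext fun j => if_neg hik
        rw [hm]
    -- each b-side evaluation is θ-related to the common a-side value
    have hθr : ∀ k, θ.r (t.eval (SAlgebra.pi Bi) (Fin.append b (m k)))
        (t.eval (SAlgebra.pi Bi) (Fin.append a (m k))) := by
      intro k
      refine PEaux.eval_rel θ t _ _ ?_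
      intro l
      refine Fin.addCases
        (motive := fun l => θ.r (Fin.append b (m k) l) (Fin.append a (m k) l)) ?_ ?_ l
      · intro j
        rw [Fin.append_left, Fin.append_left]
        exact θ.iseqv.symm (ha j)
      · intro j
        rw [Fin.append_right, Fin.append_right]
        exact θ.iseqv.refl _
    have hrr : ∀ k, θ.r (t.eval (SAlgebra.pi Bi) (Fin.append b (m k)))
        (t.eval (SAlgebra.pi Bi) (Fin.append b (m (k + 1)))) := by
      intro k
      refine θ.iseqv.trans (hθr k) ?_
      rw [hs k, ← hs (k + 1)]
      exact θ.iseqv.symm (hθr (k + 1))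
    -- consecutive b-side evaluations agree off coordinate k
    have hoffk : ∀ (k : ℕ) (hk : k < n) (j : Fin n), j ≠ ⟨k, hk⟩ →
        (t.eval (SAlgebra.pi Bi) (Fin.append b (m k))) j
          = (t.eval (SAlgebra.pi Bi) (Fin.append b (m (k + 1)))) j := by
      intro k hk j hj
      erw [PEaux.eval_apply, PEaux.eval_apply, PEaux.append_apply, PEaux.append_apply]
      have hm : (fun l => m k l j) = fun l => m (k + 1) l j :=
        funext fun l => (PEaux.mix_apply_ne (u l) (v l)
          (fun h => hj (Fin.ext h))).symm
      rw [hm]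
    -- hence consecutive b-side evaluations are equal
    have hstep : ∀ k, t.eval (SAlgebra.pi Bi) (Fin.append b (m k))
        = t.eval (SAlgebra.pi Bi) (Fin.append b (m (k + 1))) := by
      intro k
      by_cases hk : k < n
      · exact key ⟨k, hk⟩ _ _ (hrr k) (hoffk k hk)
      · have hm : m (k + 1) = m k :=
          funext fun j => PEaux.mix_succ_of_ge (u j) (v j) (le_of_not_gt hk)
        rw [hm]
    have hall : ∀ k, t.eval (SAlgebra.pi Bi) (Fin.append b (m 0))
        = t.eval (SAlgebra.pi Bi) (Fin.append b (m k)) := by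
      intro k
      induction k with
      | zero => rfl
      | succ k ih => exact ih.trans (hstep k)
    have hm0 : m 0 = u := funext fun j => PEaux.mix_zero (u j) (v j)
    have hmn : m n = v := funext fun j => PEaux.mix_top (u j) (v j)
    have hfin := hall n
    rwa [hm0, hmn] at hfin
  exact le_antisymm (sInf_le hcent) bot_le
end

section
/- Let e: A → ∏_{i=1}^n A_i be a subdirect product-essential embedding in a congruence modular variety, with η_i the kernel of the i-th induced projection, α_i := η_i ∨ ⋀_{j≠i} η_j, and ᾱ_i := α_i/η_i ∈ Con(A_i). Then the product congruence ᾱ_1 × ... × ᾱ_n is dense in Con(∏_{i=1}^n A_i). -/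
namespace AlphaBarAux

variable {Sg : Signature}

/-- The diagonal (trivial) congruence. -/
def diagCon (X : SAlgebra Sg) : SCon X where
  r a b := a = b
  iseqv := ⟨fun _ => rfl, Eq.symm, Eq.trans⟩
  compat o x y h := congrArg (X.interp o) (funext h)

theorem r_le {X : SAlgebra Sg} {c d : SCon X}
    (h : ∀ a b : X.carrier, c.r a b → d.r a b) : c ≤ d := h

theorem le_r {X : SAlgebra Sg} {c d : SCon X} (h : c ≤ d) {a b : X.carrier}
    (hab : c.r a b) : d.r a b := h a b hab

theorem bot_r {X : SAlgebra Sg} {a b : X.carrier} (h : (⊥ : SCon X).r a b) : a = b :=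
  le_r (bot_le (a := diagCon X)) h

theorem rel_bot {X : SAlgebra Sg} {a b : X.carrier} (h : a = b) : (⊥ : SCon X).r a b :=
  h ▸ (⊥ : SCon X).iseqv.refl a

theorem eq_bot_of {X : SAlgebra Sg} {c : SCon X}
    (h : ∀ a b : X.carrier, c.r a b → a = b) : c = ⊥ :=
  le_antisymm (r_le fun a b hab => rel_bot (h a b hab)) bot_le

/-- Explicit binary intersection of congruences. -/
def meetCon {X : SAlgebra Sg} (c d : SCon X) : SCon X where
  r a b := c.r a b ∧ d.r a b
  iseqv := ⟨fun a => ⟨c.iseqv.refl a, d.iseqv.refl a⟩,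
    fun h => ⟨c.iseqv.symm h.1, d.iseqv.symm h.2⟩,
    fun h h' => ⟨c.iseqv.trans h.1 h'.1, d.iseqv.trans h.2 h'.2⟩⟩
  compat o x y h := ⟨c.compat o x y fun t => (h t).1, d.compat o x y fun t => (h t).2⟩

theorem meetCon_le_inf {X : SAlgebra Sg} (c d : SCon X) : meetCon c d ≤ c ⊓ d :=
  le_inf (r_le fun _ _ h => h.1) (r_le fun _ _ h => h.2)

/-- Explicit intersection of a family of congruences. -/
def famCon {X : SAlgebra Sg} {ι : Sort*} (f : ι → SCon X) : SCon X where
  r a b := ∀ i, (f i).r a b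
  iseqv := ⟨fun a i => (f i).iseqv.refl a, fun h i => (f i).iseqv.symm (h i),
    fun h h' i => (f i).iseqv.trans (h i) (h' i)⟩
  compat o x y h i := (f i).compat o x y fun t => h t i

theorem famCon_le_iInf {X : SAlgebra Sg} {ι : Sort*} (f : ι → SCon X) :
    famCon f ≤ ⨅ i, f i :=
  le_iInf fun i => r_le fun _ _ h => h i

variable {n : ℕ} {Ai : Fin n → SAlgebra Sg}

/-- The kernel of the `j`-th projection of a product. -/
def etaHat (j : Fin n) : SCon (SAlgebra.pi Ai) where
  r a b := a j = b j
  iseqv := ⟨fun _ => rfl, Eq.symm, Eq.trans⟩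
  compat o x y h := by
    show (Ai j).interp o (fun t => x t j) = (Ai j).interp o (fun t => y t j)
    exact congrArg _ (funext h)

/-- `θ` intersected with the pullbacks of `αbar k` for `k ∈ S`. -/
def tauCon (θ : SCon (SAlgebra.pi Ai)) (αbar : ∀ i, SCon (Ai i)) (S : Finset (Fin n)) :
    SCon (SAlgebra.pi Ai) where
  r a b := θ.r a b ∧ ∀ k ∈ S, (αbar k).r (a k) (b k)
  iseqv := by
    refine ⟨fun a => ⟨θ.iseqv.refl a, fun k _ => (αbar k).iseqv.refl (a k)⟩,
      fun h => ⟨θ.iseqv.symm h.1, fun k hk => (αbar k).iseqv.symm (h.2 k hk)⟩,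
      fun h h' => ⟨θ.iseqv.trans h.1 h'.1,
        fun k hk => (αbar k).iseqv.trans (h.2 k hk) (h'.2 k hk)⟩⟩
  compat o x y h := by
    refine ⟨θ.compat o x y fun t => (h t).1, fun k hk => ?_⟩
    show (αbar k).r ((Ai k).interp o fun t => x t k) ((Ai k).interp o fun t => y t k)
    exact (αbar k).compat o _ _ fun t => (h t).2 k hk

/-- The family of congruences used with product-essentiality: at coordinate `j`
the image of `c`, elsewhere trivial. -/
def projCon (c : SCon (SAlgebra.pi Ai)) (j : Fin n) (w₀ : (SAlgebra.pi Ai).carrier)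
    (hc : ∀ u v : (SAlgebra.pi Ai).carrier, u j = v j → c.r u v) (k : Fin n) :
    SCon (Ai k) where
  r s t := (k = j → ∃ u v : (SAlgebra.pi Ai).carrier, u k = s ∧ v k = t ∧ c.r u v) ∧
    (k ≠ j → s = t)
  iseqv := by
    refine ⟨fun s => ⟨fun _ => ?_, fun _ => rfl⟩,
      fun h => ⟨fun hk => ?_, fun hk => (h.2 hk).symm⟩,
      fun h h' => ⟨fun hk => ?_, fun hk => (h.2 hk).trans (h'.2 hk)⟩⟩
    · exact ⟨Function.update w₀ k s, Function.update w₀ k s, Function.update_self .., Function.update_self ..,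
        c.iseqv.refl _⟩
    · obtain ⟨u, v, hu, hv, huv⟩ := h.1 hk
      exact ⟨v, u, hv, hu, c.iseqv.symm huv⟩
    · subst hk
      obtain ⟨u, v, hu, hv, huv⟩ := h.1 rfl
      obtain ⟨u', v', hu', hv', huv'⟩ := h'.1 rfl
      exact ⟨u, v', hu, hv',
        c.iseqv.trans huv (c.iseqv.trans (hc v u' (by rw [hv, hu'])) huv')⟩
  compat o x y h := by
    refine ⟨fun hk => ?_, fun hk => ?_⟩
    · subst hk
      choose u v hu hv huv using fun t => (h t).1 rfl
      refine ⟨(SAlgebra.pi Ai).interp o u, (SAlgebra.pi Ai).interp o v, ?_, ?_,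
        c.compat o u v huv⟩
      · show (Ai k).interp o (fun t => u t k) = (Ai k).interp o x
        exact congrArg _ (funext hu)
      · show (Ai k).interp o (fun t => v t k) = (Ai k).interp o y
        exact congrArg _ (funext hv)
    · exact congrArg _ (funext fun t => (h t).2 hk)

end AlphaBarAux

/-- For a subdirect product-essential embedding `e : A → ∏ Aᵢ` in a congruence modular
variety, with `ηᵢ` the projection kernels, `αᵢ := ηᵢ ∨ ⋀_{j ≠ i} ηⱼ` and `ᾱᵢ` the image
of `αᵢ` in `Con(Aᵢ)`, the product congruence `ᾱ₁ × ⋯ × ᾱₙ` is dense in `Con(∏ Aᵢ)`. -/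
theorem alpha_bar_product_dense {S : Signature}
    (V : SAlgebra S → Prop) (hV : IsCongruenceModularVariety V)
    (n : ℕ) (A : SAlgebra S) (Ai : Fin n → SAlgebra S)
    (hA : V A) (hAi : ∀ i, V (Ai i))
    (e : SHom A (SAlgebra.pi Ai)) (hinj : Function.Injective e.toFun)
    (hsub : ∀ i, Function.Surjective fun x => e.toFun x i)
    (hpe : ∀ φ : ∀ i, SCon (Ai i), SCon.comap e (SCon.piCon φ) = ⊥ → ∀ i, φ i = ⊥)
    (η : Fin n → SCon A)
    (hη : ∀ (i : Fin n) (x y : A.carrier), (η i).r x y ↔ e.toFun x i = e.toFun y i)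
    (αbar : ∀ i, SCon (Ai i))
    (hαbar : ∀ (i : Fin n) (u v : (Ai i).carrier),
      (αbar i).r u v ↔ ∃ x y : A.carrier, e.toFun x i = u ∧ e.toFun y i = v ∧
        (η i ⊔ ⨅ j : {j : Fin n // j ≠ i}, η j.1).r x y) :
    DenseCon (SCon.piCon αbar) := by
  intro θ h0
  haveI hmod : IsModularLattice (SCon (SAlgebra.pi Ai)) :=
    hV.2 _ (hV.1.2.2 (Fin n) Ai hAi)
  by_cases hA0 : Nonempty A.carrier
  · obtain ⟨a₀⟩ := hA0
    have hεα : ∀ j : Fin n,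
        AlphaBarAux.etaHat (Ai := Ai) j ≤ SCon.comap (SHom.proj Ai j) (αbar j) :=
      fun j => AlphaBarAux.r_le fun a b h =>
        show (αbar j).r (a j) (b j) from h ▸ (αbar j).iseqv.refl (a j)
    have KEY : ∀ (m : ℕ) (S : Finset (Fin n)) (u v : (SAlgebra.pi Ai).carrier),
        (Finset.univ \ S).card ≤ m → θ.r u v →
        (∀ k ∈ S, (αbar k).r (u k) (v k)) → u = v := by
      intro m
      induction m with
      | zero =>
        intro S u v hcard hθuv hSuv
        have hSu : ∀ k, k ∈ S := by
          intro k
          by_contra hk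
          have hmem : k ∈ Finset.univ \ S := Finset.mem_sdiff.mpr ⟨Finset.mem_univ k, hk⟩
          have := Finset.card_pos.mpr ⟨k, hmem⟩
          omega
        have hmem : (AlphaBarAux.meetCon θ (SCon.piCon αbar)).r u v :=
          ⟨hθuv, fun k => hSuv k (hSu k)⟩
        exact AlphaBarAux.bot_r
          (AlphaBarAux.le_r (le_trans (AlphaBarAux.meetCon_le_inf _ _) (le_of_eq h0)) hmem)
      | succ m ih =>
        intro S u v hcard hθuv hSuv
        have hcoord : ∀ j, j ∉ S → u j = v j := by
          intro j hj
          have hηc : ∀ a b : (SAlgebra.pi Ai).carrier, a j = b j →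
              (AlphaBarAux.tauCon θ αbar S ⊔ AlphaBarAux.etaHat (Ai := Ai) j).r a b :=
            fun a b h => AlphaBarAux.le_r le_sup_right
              (show (AlphaBarAux.etaHat (Ai := Ai) j).r a b from h)
          -- the inductive meet bound
          have hih : AlphaBarAux.tauCon θ αbar S ⊓ SCon.comap (SHom.proj Ai j) (αbar j) ≤
              AlphaBarAux.etaHat (Ai := Ai) j := by
            apply AlphaBarAux.r_le
            intro a b hab
            have h1 : (AlphaBarAux.tauCon θ αbar S).r a b :=
              AlphaBarAux.le_r inf_le_left hab
            have h2 : (SCon.comap (SHom.proj Ai j) (αbar j)).r a b :=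
              AlphaBarAux.le_r inf_le_right hab
            have hins : a = b := by
              refine ih (insert j S) a b ?_ h1.1 ?_
              · have hj' : j ∈ Finset.univ \ S :=
                  Finset.mem_sdiff.mpr ⟨Finset.mem_univ j, hj⟩
                have heq : Finset.univ \ insert j S = (Finset.univ \ S).erase j := by
                  ext t
                  simp only [Finset.mem_sdiff, Finset.mem_univ, true_and,
                    Finset.mem_insert, Finset.mem_erase]
                  tauto
                rw [heq, Finset.card_erase_of_mem hj']
                have := Finset.card_pos.mpr ⟨j, hj'⟩
                omega
              · intro k hk
                rcases Finset.mem_insert.mp hk with rfl | hkS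
                · exact h2
                · exact h1.2 k hkS
            show a j = b j
            rw [hins]
          -- modular law
          have hkey : (AlphaBarAux.etaHat (Ai := Ai) j ⊔ AlphaBarAux.tauCon θ αbar S) ⊓
              SCon.comap (SHom.proj Ai j) (αbar j) ≤ AlphaBarAux.etaHat (Ai := Ai) j := by
            rw [sup_inf_assoc_of_le _ (hεα j)]
            exact sup_le le_rfl hih
          -- product essentiality
          have hφbot := hpe (AlphaBarAux.projCon _ j (e.toFun a₀) hηc) ?_
          · have hφj : (AlphaBarAux.projCon _ j (e.toFun a₀) hηc j).r (u j) (v j) :=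
              ⟨fun _ => ⟨u, v, rfl, rfl, AlphaBarAux.le_r le_sup_left ⟨hθuv, hSuv⟩⟩,
                fun hne => absurd rfl hne⟩
            rw [hφbot j] at hφj
            exact AlphaBarAux.bot_r hφj
          · apply AlphaBarAux.eq_bot_of
            intro x y hxy
            have hk : ∀ k, (AlphaBarAux.projCon _ j (e.toFun a₀) hηc k).r
                (e.toFun x k) (e.toFun y k) := hxy
            have hne : ∀ k, k ≠ j → e.toFun x k = e.toFun y k := fun k h => (hk k).2 h
            obtain ⟨u', v', hu', hv', huv'⟩ := (hk j).1 rfl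
            have h1 : (AlphaBarAux.tauCon θ αbar S ⊔
                AlphaBarAux.etaHat (Ai := Ai) j).r (e.toFun x) (e.toFun y) :=
              (AlphaBarAux.tauCon θ αbar S ⊔ AlphaBarAux.etaHat (Ai := Ai) j).iseqv.trans
                (hηc _ _ hu'.symm)
                ((AlphaBarAux.tauCon θ αbar S ⊔
                  AlphaBarAux.etaHat (Ai := Ai) j).iseqv.trans huv' (hηc _ _ hv'))
            have h1' : (AlphaBarAux.etaHat (Ai := Ai) j ⊔
                AlphaBarAux.tauCon θ αbar S).r (e.toFun x) (e.toFun y) :=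
              AlphaBarAux.le_r (sup_le le_sup_right le_sup_left) h1
            have h2 : (αbar j).r (e.toFun x j) (e.toFun y j) := by
              apply (hαbar j _ _).mpr
              refine ⟨x, y, rfl, rfl, ?_⟩
              refine AlphaBarAux.le_r le_sup_right ?_
              refine AlphaBarAux.le_r
                (AlphaBarAux.famCon_le_iInf fun jj : {jj : Fin n // jj ≠ j} => η jj.1) ?_
              exact fun jj => (hη jj.1 x y).mpr (hne jj.1 jj.2)
            have hmem : (AlphaBarAux.meetCon
                (AlphaBarAux.etaHat (Ai := Ai) j ⊔ AlphaBarAux.tauCon θ αbar S)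
                (SCon.comap (SHom.proj Ai j) (αbar j))).r (e.toFun x) (e.toFun y) :=
              ⟨h1', h2⟩
            have hej : (AlphaBarAux.etaHat (Ai := Ai) j).r (e.toFun x) (e.toFun y) :=
              AlphaBarAux.le_r (le_trans (AlphaBarAux.meetCon_le_inf _ _) hkey) hmem
            apply hinj
            funext k
            by_cases hkj : k = j
            · subst hkj; exact hej
            · exact hne k hkj
        have hall : ∀ k, (αbar k).r (u k) (v k) := by
          intro k
          by_cases hk : k ∈ S
          · exact hSuv k hk
          · exact hcoord k hk ▸ (αbar k).iseqv.refl (u k)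
        have hmem : (AlphaBarAux.meetCon θ (SCon.piCon αbar)).r u v := ⟨hθuv, hall⟩
        exact AlphaBarAux.bot_r
          (AlphaBarAux.le_r (le_trans (AlphaBarAux.meetCon_le_inf _ _) (le_of_eq h0)) hmem)
    apply AlphaBarAux.eq_bot_of
    intro a b hab
    exact KEY n ∅ a b (by simp) hab (fun k hk => absurd hk (Finset.notMem_empty k))
  · apply AlphaBarAux.eq_bot_of
    intro a b hab
    rcases Nat.eq_zero_or_pos n with hn | hn
    · subst hn
      exact funext fun k => k.elim0
    · exact absurd ⟨(hsub ⟨0, hn⟩ (a ⟨0, hn⟩)).choose⟩ hA0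
end

section
/- If A is a directly indecomposable absolute retract in a congruence modular variety, then A is finitely subdirectly irreducible. -/
namespace FSIAux

variable {S : Signature}

/-- The equality congruence. -/
def eqCon (A : SAlgebra S) : SCon A where
  r := Eq
  iseqv := ⟨fun _ => rfl, Eq.symm, Eq.trans⟩
  compat o x y h := congrArg (A.interp o) (funext h)

lemma le_apply {A : SAlgebra S} {a b : SCon A} (h : a ≤ b) {x y : A.carrier}
    (hxy : a.r x y) : b.r x y := h x y hxy

lemma eq_of_bot_r {A : SAlgebra S} {x y : A.carrier} (h : (⊥ : SCon A).r x y) : x = y :=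
  le_apply (bot_le (a := eqCon A)) h

lemma bot_r_of_eq {A : SAlgebra S} {x y : A.carrier} (h : x = y) : (⊥ : SCon A).r x y :=
  h ▸ (⊥ : SCon A).iseqv.refl x

/-- The conjunction of two congruences, as a congruence. -/
def andCon {A : SAlgebra S} (a b : SCon A) : SCon A where
  r x y := a.r x y ∧ b.r x y
  iseqv := ⟨fun x => ⟨a.iseqv.refl x, b.iseqv.refl x⟩,
    fun h => ⟨a.iseqv.symm h.1, b.iseqv.symm h.2⟩,
    fun h h' => ⟨a.iseqv.trans h.1 h'.1, b.iseqv.trans h.2 h'.2⟩⟩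
  compat o x y h := ⟨a.compat o x y fun i => (h i).1, b.compat o x y fun i => (h i).2⟩

lemma inf_rel {A : SAlgebra S} {a b : SCon A} {x y : A.carrier}
    (h1 : a.r x y) (h2 : b.r x y) : (a ⊓ b).r x y :=
  le_apply (le_inf (show andCon a b ≤ a from fun _ _ h => h.1)
    (show andCon a b ≤ b from fun _ _ h => h.2)) (⟨h1, h2⟩ : (andCon a b).r x y)

/-- A family over `Bool` used to realize binary products as `pi`-products. -/
def boolFam (B C : SAlgebra S) : Bool → SAlgebra S := fun b => cond b B C

def prodToPi (B C : SAlgebra S) : SHom (B.prod C) (SAlgebra.pi (boolFam B C)) where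
  toFun z := fun b => Bool.rec z.2 z.1 b
  map o x := funext fun b => by cases b <;> rfl

lemma V_prod {V : SAlgebra S → Prop} (hV : IsVariety V) {B C : SAlgebra S}
    (hB : V B) (hC : V C) : V (B.prod C) := by
  refine hV.1 _ _ (prodToPi B C) ?_ (hV.2.2 Bool (boolFam B C) ?_)
  · intro z w h
    exact Prod.ext (congrFun h true) (congrFun h false)
  · intro i
    cases i
    · exact hC
    · exact hB

lemma V_quot {V : SAlgebra S → Prop} (hV : IsVariety V) {A : SAlgebra S} (hA : V A)
    (θ : SCon A) : V (A.quot θ) :=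
  hV.2.1 A (A.quot θ) (SHom.quotHom A θ) (fun q => ⟨q.out, q.out_eq⟩) hA

/-- The subalgebra of `D × D` of pairs related by the congruence `β`. -/
def relAlg (D : SAlgebra S) (β : SCon D) : SAlgebra S where
  carrier := {q : D.carrier × D.carrier // β.r q.1 q.2}
  interp o x := ⟨(D.interp o fun i => (x i).1.1, D.interp o fun i => (x i).1.2),
    β.compat o _ _ fun i => (x i).2⟩

def relAlgEmb (D : SAlgebra S) (β : SCon D) : SHom (relAlg D β) (D.prod D) where
  toFun q := q.1
  map _ _ := rfl

def relFst (D : SAlgebra S) (β : SCon D) : SHom (relAlg D β) D where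
  toFun q := q.1.1
  map _ _ := rfl

def relSnd (D : SAlgebra S) (β : SCon D) : SHom (relAlg D β) D where
  toFun q := q.1.2
  map _ _ := rfl

/-- Gumm's Shifting Lemma, valid in any congruence modular variety. -/
theorem shifting {V : SAlgebra S → Prop} (hV : IsCongruenceModularVariety V)
    {D : SAlgebra S} (hD : V D) (α β γ : SCon D)
    (hins : ∀ x y, α.r x y → β.r x y → γ.r x y)
    {a b c d : D.carrier}
    (hab : β.r a b) (hcd : β.r c d) (hac : α.r a c) (hbd : α.r b d)
    (hγ : γ.r c d) : γ.r a b := by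
  have hVE : V (relAlg D β) :=
    hV.1.1 _ _ (relAlgEmb D β) (fun u v h => Subtype.ext h) (V_prod hV.1 hD hD)
  haveI := hV.2 _ hVE
  let f1 := relFst D β
  let f2 := relSnd D β
  let αB : SCon (relAlg D β) := SCon.comap f1 α ⊓ SCon.comap f2 α
  let e1 : SCon (relAlg D β) := SCon.comap f1 ⊥
  let γ2 : SCon (relAlg D β) := SCon.comap f2 γ
  let P0 : (relAlg D β).carrier := ⟨(a, b), hab⟩
  let Q0 : (relAlg D β).carrier := ⟨(c, d), hcd⟩
  let P1 : (relAlg D β).carrier := ⟨(a, a), β.iseqv.refl a⟩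
  let Q1 : (relAlg D β).carrier := ⟨(c, c), β.iseqv.refl c⟩
  have hPQ : αB.r P0 Q0 := inf_rel (show α.r a c from hac) (show α.r b d from hbd)
  have hQP : αB.r Q1 P1 :=
    inf_rel (show α.r c a from α.iseqv.symm hac) (show α.r c a from α.iseqv.symm hac)
  have hQQ : (e1 ⊓ γ2).r Q0 Q1 :=
    inf_rel (show (⊥ : SCon D).r c c from bot_r_of_eq rfl)
      (show γ.r d c from γ.iseqv.symm hγ)
  have hmem : (((e1 ⊓ γ2) ⊔ αB) ⊓ e1).r P0 P1 := by
    refine inf_rel ?_ (show (⊥ : SCon D).r a a from bot_r_of_eq rfl)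
    exact ((e1 ⊓ γ2) ⊔ αB).iseqv.trans (le_apply le_sup_right hPQ)
      (((e1 ⊓ γ2) ⊔ αB).iseqv.trans (le_apply le_sup_left hQQ) (le_apply le_sup_right hQP))
  rw [sup_inf_assoc_of_le (y := αB) (show e1 ⊓ γ2 ≤ e1 from inf_le_left)] at hmem
  have hfin : ((e1 ⊓ γ2) ⊔ αB ⊓ e1) ≤ γ2 := by
    refine sup_le inf_le_right ?_
    intro q q' h
    have hα : αB.r q q' := le_apply inf_le_left h
    have heq : q.1.1 = q'.1.1 := eq_of_bot_r (le_apply (inf_le_right (a := αB) (b := e1)) h)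
    have hβ : β.r q.1.2 q'.1.2 := by
      refine β.iseqv.trans (β.iseqv.symm q.2) ?_
      rw [heq]
      exact q'.2
    exact hins _ _ (le_apply (inf_le_right (a := SCon.comap f1 α) (b := SCon.comap f2 α)) hα) hβ
  have : γ2.r P0 P1 := le_apply hfin hmem
  exact γ.iseqv.symm this

/-- The key lemma: a congruence on the extension that restricts inside a maximal
complement must meet the corresponding projection kernel trivially. -/
theorem lemmaA {V : SAlgebra S → Prop} (hV : IsCongruenceModularVariety V)
    {A P : SAlgebra S} (hP : V P)
    (e : SHom A P) (p : SHom P A) (hp : ∀ x, p.toFun (e.toFun x) = x)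
    (ε1 ε2 : SCon P)
    (hd : ∀ z w, ε1.r z w → ε2.r z w → z = w)
    (hcomb : ∀ u v : P.carrier, ∃ m, ε1.r m u ∧ ε2.r m v)
    (hsurj : ∀ z : P.carrier, ∃ x, ε2.r (e.toFun x) z)
    (hmax : ∀ ψ : SCon A, SCon.comap e ε2 ≤ ψ →
      (∀ x y, ψ.r x y → ε1.r (e.toFun x) (e.toFun y) → x = y) → ψ = SCon.comap e ε2)
    (Ψ : SCon P)
    (hΨ : ∀ x y, Ψ.r (e.toFun x) (e.toFun y) → ε1.r (e.toFun x) (e.toFun y) → x = y) :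
    ∀ z w, Ψ.r z w → ε1.r z w → z = w := by
  classical
  have hins : ∀ x y, ε2.r x y → ε1.r x y → Ψ.r x y := fun x y h2 h1 =>
    (hd x y h1 h2) ▸ Ψ.iseqv.refl x
  obtain ⟨bc, hbc⟩ : ∃ bc : SCon A, ∀ x y, bc.r x y ↔
      ∃ m, Ψ.r (e.toFun x) m ∧ ε1.r (e.toFun x) m ∧ ε2.r m (e.toFun y) := by
    refine ⟨⟨fun x y => ∃ m, Ψ.r (e.toFun x) m ∧ ε1.r (e.toFun x) m ∧ ε2.r m (e.toFun y),
      ⟨?_, ?_, ?_⟩, ?_⟩, fun _ _ => Iff.rfl⟩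
    · intro x
      exact ⟨e.toFun x, Ψ.iseqv.refl _, ε1.iseqv.refl _, ε2.iseqv.refl _⟩
    · rintro x y ⟨m, h1, h2, h3⟩
      obtain ⟨m', hm1, hm2⟩ := hcomb (e.toFun y) (e.toFun x)
      have hnew : Ψ.r (e.toFun y) m' :=
        shifting hV hP ε2 ε1 Ψ hins (ε1.iseqv.symm hm1) (ε1.iseqv.symm h2)
          (ε2.iseqv.symm h3) hm2 (Ψ.iseqv.symm h1)
      exact ⟨m', hnew, ε1.iseqv.symm hm1, hm2⟩
    · rintro x y z ⟨m1, h1, h2, h3⟩ ⟨m2, g1, g2, g3⟩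
      obtain ⟨m3, hm1, hm2⟩ := hcomb m1 m2
      have hstep : Ψ.r m1 m3 :=
        shifting hV hP ε2 ε1 Ψ hins (ε1.iseqv.symm hm1) g2 h3 hm2 g1
      exact ⟨m3, Ψ.iseqv.trans h1 hstep,
        ε1.iseqv.trans h2 (ε1.iseqv.symm hm1),
        ε2.iseqv.trans hm2 g3⟩
    · intro o x y h
      choose m hm1 hm2 hm3 using h
      refine ⟨P.interp o m, ?_, ?_, ?_⟩
      · rw [e.map]
        exact Ψ.compat o _ _ hm1
      · rw [e.map]
        exact ε1.compat o _ _ hm2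
      · rw [e.map]
        exact ε2.compat o _ _ hm3
  have hbeq : bc = SCon.comap e ε2 := by
    refine hmax bc ?_ ?_
    · intro x y h
      exact (hbc x y).2 ⟨e.toFun x, Ψ.iseqv.refl _, ε1.iseqv.refl _, h⟩
    · intro x y hB h1
      obtain ⟨m, g1, g2, g3⟩ := (hbc x y).1 hB
      have hme : m = e.toFun y := hd _ _ (ε1.iseqv.trans (ε1.iseqv.symm g2) h1) g3
      exact hΨ x y (hme ▸ g1) h1
  intro z w hzw h1zw
  obtain ⟨x, hx⟩ := hsurj z
  obtain ⟨y, hy⟩ := hsurj w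
  obtain ⟨m, hm1, hm2⟩ := hcomb (e.toFun x) w
  have hexm : Ψ.r (e.toFun x) m :=
    shifting hV hP ε2 ε1 Ψ hins (ε1.iseqv.symm hm1) h1zw hx hm2 hzw
  have hBxy : bc.r x y := (hbc x y).2 ⟨m, hexm, ε1.iseqv.symm hm1,
    ε2.iseqv.trans hm2 (ε2.iseqv.symm hy)⟩
  have h2xy : ε2.r (e.toFun x) (e.toFun y) := by
    rw [hbeq] at hBxy
    exact hBxy
  have h2zw : ε2.r z w := ε2.iseqv.trans (ε2.iseqv.symm hx) (ε2.iseqv.trans h2xy hy)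
  exact hd z w h1zw h2zw

/-- Upper bounds for finitely many elements of a chain. -/
lemma chain_bound {A : SAlgebra S} {c : Set (SCon A)} (hc : IsChain (· ≤ ·) c)
    {ψ0 : SCon A} (h0 : ψ0 ∈ c) :
    ∀ {n : ℕ} (g : Fin n → SCon A), (∀ i, g i ∈ c) → ∃ ψ ∈ c, ∀ i, g i ≤ ψ := by
  intro n
  induction n with
  | zero => exact fun g _ => ⟨ψ0, h0, fun i => i.elim0⟩
  | succ k ih =>
    intro g hg
    obtain ⟨ψ, hψc, hψ⟩ := ih (fun i => g i.succ) (fun i => hg i.succ)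
    rcases hc.total (hg 0) hψc with h | h
    · exact ⟨ψ, hψc, fun i => Fin.cases h (fun j => hψ j) i⟩
    · exact ⟨g 0, hg 0, fun i => Fin.cases le_rfl (fun j => (hψ j).trans h) i⟩

/-- The union of a nonempty chain of congruences. -/
def chainSup {A : SAlgebra S} (c : Set (SCon A)) (hc : IsChain (· ≤ ·) c)
    {ψ0 : SCon A} (h0 : ψ0 ∈ c) : SCon A where
  r x y := ∃ ψ ∈ c, ψ.r x y
  iseqv := by
    refine ⟨fun x => ⟨ψ0, h0, ψ0.iseqv.refl x⟩, ?_, ?_⟩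
    · rintro x y ⟨ψ, hψ, h⟩
      exact ⟨ψ, hψ, ψ.iseqv.symm h⟩
    · rintro x y z ⟨ψ1, h1, hr1⟩ ⟨ψ2, h2, hr2⟩
      rcases hc.total h1 h2 with h | h
      · exact ⟨ψ2, h2, ψ2.iseqv.trans (h _ _ hr1) hr2⟩
      · exact ⟨ψ1, h1, ψ1.iseqv.trans hr1 (h _ _ hr2)⟩
  compat := by
    intro o x y h
    choose g hg hr using h
    obtain ⟨ψ, hψc, hψ⟩ := chain_bound hc h0 g hg
    exact ⟨ψ, hψc, ψ.compat o x y fun i => hψ i _ _ (hr i)⟩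

/-- Elementwise disjointness of congruences. -/
def Disj {A : SAlgebra S} (a b : SCon A) : Prop := ∀ x y, a.r x y → b.r x y → x = y

end FSIAux

/-- A directly indecomposable absolute retract in a congruence modular variety is
finitely subdirectly irreducible. -/
theorem directly_indecomposable_AR_is_FSI {S : Signature}
    (V : SAlgebra S → Prop) (hV : IsCongruenceModularVariety V)
    (A : SAlgebra S) (hA : V A) (har : IsAbsoluteRetract V A)
    (hind : ∀ (B C : SAlgebra S) (f : SHom A (B.prod C)), Function.Bijective f.toFun →
      Subsingleton B.carrier ∨ Subsingleton C.carrier) :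
    IsFSI A := by
  
  intro θ φ hθφ
  classical
  open FSIAux in
  -- elementwise disjointness of θ and φ
  have hdisj0 : Disj θ φ := fun x y h1 h2 => eq_of_bot_r (hθφ ▸ inf_rel h1 h2)
  -- Zorn: a maximal congruence θ' ⊇ θ disjoint from φ
  obtain ⟨θ', hθθ', hθ'max⟩ := zorn_le_nonempty₀ {ψ : SCon A | Disj ψ φ}
    (fun c hcs hc y hy => ⟨chainSup c hc hy,
      fun x2 y2 ⟨ψ, hψ, hr⟩ hφ => hcs hψ x2 y2 hr hφ,
      fun z hz x2 y2 h => ⟨z, hz, h⟩⟩) θ hdisj0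
  have hdθ'φ : Disj θ' φ := hθ'max.1
  -- Zorn: a maximal congruence φ' ⊇ φ disjoint from θ'
  obtain ⟨φ', hφφ', hφ'max⟩ := zorn_le_nonempty₀ {ψ : SCon A | Disj ψ θ'}
    (fun c hcs hc y hy => ⟨chainSup c hc hy,
      fun x2 y2 ⟨ψ, hψ, hr⟩ hφ => hcs hψ x2 y2 hr hφ,
      fun z hz x2 y2 h => ⟨z, hz, h⟩⟩) φ (fun x y h1 h2 => hdθ'φ x y h2 h1)
  have hd : Disj θ' φ' := fun x y h1 h2 => hφ'max.1 x y h2 h1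
  -- mutual maximality
  have hmaxθ' : ∀ ψ : SCon A, θ' ≤ ψ → Disj ψ φ' → ψ = θ' := fun ψ hle hdd =>
    le_antisymm (hθ'max.2 (fun x y h1 h2 => hdd x y h1 (hφφ' x y h2)) hle) hle
  have hmaxφ' : ∀ ψ : SCon A, φ' ≤ ψ → Disj ψ θ' → ψ = φ' := fun ψ hle hdd =>
    le_antisymm (hφ'max.2 hdd hle) hle
  -- the subdirect embedding into the product of quotients
  have hVB : V (A.quot θ') := V_quot hV.1 hA θ'
  have hVC : V (A.quot φ') := V_quot hV.1 hA φ'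
  have hVP : V ((A.quot θ').prod (A.quot φ')) := V_prod hV.1 hVB hVC
  set P : SAlgebra S := (A.quot θ').prod (A.quot φ') with hPdef
  let e : SHom A P :=
    { toFun := fun x => ((SHom.quotHom A θ').toFun x, (SHom.quotHom A φ').toFun x)
      map := fun o x => Prod.ext ((SHom.quotHom A θ').map o x) ((SHom.quotHom A φ').map o x) }
  have einj : Function.Injective e.toFun := fun x y h =>
    hd x y (Quotient.exact (congrArg Prod.fst h)) (Quotient.exact (congrArg Prod.snd h))
  obtain ⟨p, hp⟩ := har P hVP e einj
  -- the relevant congruences on P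
  let fB : SHom P (A.quot θ') := ⟨Prod.fst, fun _ _ => rfl⟩
  let fC : SHom P (A.quot φ') := ⟨Prod.snd, fun _ _ => rfl⟩
  let η1 : SCon P := SCon.comap fB ⊥
  let η2 : SCon P := SCon.comap fC ⊥
  let κ : SCon P := SCon.comap p ⊥
  let lam1 : SCon P := SCon.comap p θ'
  let lam2 : SCon P := SCon.comap p φ'
  have hd12 : ∀ z w : P.carrier, η1.r z w → η2.r z w → z = w := fun z w h1 h2 =>
    Prod.ext (eq_of_bot_r h1) (eq_of_bot_r h2)
  have hκe : ∀ x y, κ.r (e.toFun x) (e.toFun y) → x = y := by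
    intro x y h
    have h2 : p.toFun (e.toFun x) = p.toFun (e.toFun y) := eq_of_bot_r h
    rwa [hp, hp] at h2
  have hκ1 : κ ≤ lam1 := by
    intro z w h
    show θ'.r (p.toFun z) (p.toFun w)
    rw [eq_of_bot_r h]
    exact θ'.iseqv.refl _
  have hκ2 : κ ≤ lam2 := by
    intro z w h
    show φ'.r (p.toFun z) (p.toFun w)
    rw [eq_of_bot_r h]
    exact φ'.iseqv.refl _
  haveI hmod : IsModularLattice (SCon P) := hV.2 P hVP
  -- first application of the key lemma
  have hA1 : ∀ z w, ((κ ⊔ η1) ⊓ lam2).r z w → η1.r z w → z = w := by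
    refine lemmaA hV hVP e p hp η1 η2 hd12
      (fun u v => ⟨(u.1, v.2), bot_r_of_eq rfl, bot_r_of_eq rfl⟩)
      (fun z => ⟨z.2.out, bot_r_of_eq z.2.out_eq⟩) ?_ _ ?_
    · intro ψ hle hdd
      have hle' : φ' ≤ ψ := fun x y h => hle x y (bot_r_of_eq (Quotient.sound h))
      have heq : ψ = φ' := hmaxφ' ψ hle'
        (fun x y h1 h2 => hdd x y h1 (bot_r_of_eq (Quotient.sound h2)))
      rw [heq]
      refine le_antisymm ?_ ?_
      · intro x y h
        exact bot_r_of_eq (Quotient.sound h)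
      · intro x y h
        exact Quotient.exact (eq_of_bot_r h)
    · intro x y hΨr h1
      have hl2 : φ'.r (p.toFun (e.toFun x)) (p.toFun (e.toFun y)) :=
        le_apply (inf_le_right (a := κ ⊔ η1) (b := lam2)) hΨr
      rw [hp, hp] at hl2
      exact hd x y (Quotient.exact (eq_of_bot_r h1)) hl2
  have hinf1 : η1 ⊓ ((κ ⊔ η1) ⊓ lam2) = ⊥ :=
    le_antisymm (fun z w h => bot_r_of_eq
      (hA1 z w (le_apply inf_le_right h) (le_apply inf_le_left h))) bot_le
  have hΨ1κ : (κ ⊔ η1) ⊓ lam2 = κ := by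
    calc (κ ⊔ η1) ⊓ lam2 = (κ ⊔ η1) ⊓ ((κ ⊔ η1) ⊓ lam2) :=
          (inf_eq_right.mpr inf_le_left).symm
      _ = κ ⊔ η1 ⊓ ((κ ⊔ η1) ⊓ lam2) :=
          sup_inf_assoc_of_le η1 (le_inf le_sup_left hκ2)
      _ = κ := by rw [hinf1, sup_bot_eq]
  have hρ1 : SCon.comap e (κ ⊔ η1) = θ' := by
    refine hmaxθ' _ ?_ ?_
    · intro x y h
      exact le_apply le_sup_right (bot_r_of_eq (Quotient.sound h))
    · intro x y h1 h2
      have hl2 : lam2.r (e.toFun x) (e.toFun y) := by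
        show φ'.r (p.toFun (e.toFun x)) (p.toFun (e.toFun y))
        rw [hp, hp]
        exact h2
      have hk : ((κ ⊔ η1) ⊓ lam2).r (e.toFun x) (e.toFun y) := inf_rel h1 hl2
      rw [hΨ1κ] at hk
      exact hκe x y hk
  -- second (mirror) application of the key lemma
  have hA2 : ∀ z w, ((κ ⊔ η2) ⊓ lam1).r z w → η2.r z w → z = w := by
    refine lemmaA hV hVP e p hp η2 η1 (fun z w h1 h2 => hd12 z w h2 h1)
      (fun u v => ⟨(v.1, u.2), bot_r_of_eq rfl, bot_r_of_eq rfl⟩)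
      (fun z => ⟨z.1.out, bot_r_of_eq z.1.out_eq⟩) ?_ _ ?_
    · intro ψ hle hdd
      have hle' : θ' ≤ ψ := fun x y h => hle x y (bot_r_of_eq (Quotient.sound h))
      have heq : ψ = θ' := hmaxθ' ψ hle'
        (fun x y h1 h2 => hdd x y h1 (bot_r_of_eq (Quotient.sound h2)))
      rw [heq]
      refine le_antisymm ?_ ?_
      · intro x y h
        exact bot_r_of_eq (Quotient.sound h)
      · intro x y h
        exact Quotient.exact (eq_of_bot_r h)
    · intro x y hΨr h1
      have hl1 : θ'.r (p.toFun (e.toFun x)) (p.toFun (e.toFun y)) :=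
        le_apply (inf_le_right (a := κ ⊔ η2) (b := lam1)) hΨr
      rw [hp, hp] at hl1
      exact hd x y hl1 (Quotient.exact (eq_of_bot_r h1))
  have hinf2 : η2 ⊓ ((κ ⊔ η2) ⊓ lam1) = ⊥ :=
    le_antisymm (fun z w h => bot_r_of_eq
      (hA2 z w (le_apply inf_le_right h) (le_apply inf_le_left h))) bot_le
  have hΨ2κ : (κ ⊔ η2) ⊓ lam1 = κ := by
    calc (κ ⊔ η2) ⊓ lam1 = (κ ⊔ η2) ⊓ ((κ ⊔ η2) ⊓ lam1) :=
          (inf_eq_right.mpr inf_le_left).symm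
      _ = κ ⊔ η2 ⊓ ((κ ⊔ η2) ⊓ lam1) :=
          sup_inf_assoc_of_le η2 (le_inf le_sup_left hκ1)
      _ = κ := by rw [hinf2, sup_bot_eq]
  have hρ2 : SCon.comap e (κ ⊔ η2) = φ' := by
    refine hmaxφ' _ ?_ ?_
    · intro x y h
      exact le_apply le_sup_right (bot_r_of_eq (Quotient.sound h))
    · intro x y h1 h2
      have hl1 : lam1.r (e.toFun x) (e.toFun y) := by
        show θ'.r (p.toFun (e.toFun x)) (p.toFun (e.toFun y))
        rw [hp, hp]
        exact h2
      have hk : ((κ ⊔ η2) ⊓ lam1).r (e.toFun x) (e.toFun y) := inf_rel h1 hl1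
      rw [hΨ2κ] at hk
      exact hκe x y hk
  -- e is surjective
  have hsurjE : Function.Surjective e.toFun := by
    intro z
    refine ⟨p.toFun z, ?_⟩
    have hz1 : θ'.r (p.toFun z) z.1.out := by
      have h : (κ ⊔ η1).r (e.toFun (p.toFun z)) (e.toFun z.1.out) :=
        (κ ⊔ η1).iseqv.trans
          (le_apply le_sup_left (bot_r_of_eq (hp (p.toFun z)) : κ.r (e.toFun (p.toFun z)) z))
          (le_apply le_sup_right (bot_r_of_eq z.1.out_eq.symm : η1.r z (e.toFun z.1.out)))
      have h2 : (SCon.comap e (κ ⊔ η1)).r (p.toFun z) z.1.out := h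
      rw [hρ1] at h2
      exact h2
    have hz2 : φ'.r (p.toFun z) z.2.out := by
      have h : (κ ⊔ η2).r (e.toFun (p.toFun z)) (e.toFun z.2.out) :=
        (κ ⊔ η2).iseqv.trans
          (le_apply le_sup_left (bot_r_of_eq (hp (p.toFun z)) : κ.r (e.toFun (p.toFun z)) z))
          (le_apply le_sup_right (bot_r_of_eq z.2.out_eq.symm : η2.r z (e.toFun z.2.out)))
      have h2 : (SCon.comap e (κ ⊔ η2)).r (p.toFun z) z.2.out := h
      rw [hρ2] at h2
      exact h2
    exact Prod.ext ((Quotient.sound hz1).trans z.1.out_eq)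
      ((Quotient.sound hz2).trans z.2.out_eq)
  -- direct indecomposability finishes the proof
  rcases hind (A.quot θ') (A.quot φ') e ⟨einj, hsurjE⟩ with hsub | hsub
  · right
    refine le_antisymm ?_ bot_le
    intro x y h
    refine bot_r_of_eq (hd x y ?_ (hφφ' x y h))
    have hq : Quotient.mk θ'.setoid x = Quotient.mk θ'.setoid y :=
      @Subsingleton.elim _ hsub _ _
    exact Quotient.exact hq
  · left
    refine le_antisymm ?_ bot_le
    intro x y h
    refine bot_r_of_eq (hd x y (hθθ' x y h) ?_)
    have hq : Quotient.mk φ'.setoid x = Quotient.mk φ'.setoid y :=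
      @Subsingleton.elim _ hsub _ _
    exact Quotient.exact hq
end
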